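/- arXiv:2009.13713 — 6 statements merged into one kernel-verified Lean document; each statement's English description precedes it below -/
import Mathlib

section
/- Let (X, B, μ) be a σ-finite measure space and f : X → X a bijective bimeasurable nonsingular transformation such that μ(f⁻¹(B)) ≤ c·μ(B) for all measurable B and some c > 0. If f satisfies the Summability Condition (SC), then f is dissipative, i.e., there exists a measurable wandering set W (the sets fⁿ(W), n ∈ ℤ, are pairwise disjoint) with X = ⋃_{n∈ℤ} fⁿ(W), up to a μ-null set. -/
open MeasureTheory Set Filter
open scoped ENNReal NNReal

/-- The image of a set under the `n`-th power (`n ∈ ℤ`) of a bijection `f`. -/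
def zimg {X : Type*} (f : X → X) (n : ℤ) (B : Set X) : Set X :=
  if 0 ≤ n then f^[n.toNat] '' B else f^[(-n).toNat] ⁻¹' B

/-- `W` is a wandering set for `f`: the sets `fⁿ(W)`, `n ∈ ℤ`, are pairwise disjoint. -/
def Wandering {X : Type*} (f : X → X) (W : Set X) : Prop :=
  Pairwise fun m n : ℤ => Disjoint (zimg f m W) (zimg f n W)

/-- `W` generates `X`: `X = ⋃_{n ∈ ℤ} fⁿ(W)`. -/
def GeneratedBy {X : Type*} (f : X → X) (W : Set X) : Prop :=
  (⋃ n : ℤ, zimg f n W) = Set.univ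

/-- The Summability Condition (SC). -/
def SCcond {X : Type*} [MeasurableSpace X] (μ : Measure X) (f : X → X) : Prop :=
  ∀ ε : ℝ≥0∞, 0 < ε → ∀ B : Set X, MeasurableSet B → μ B < ⊤ →
    ∃ B' : Set X, B' ⊆ B ∧ MeasurableSet B' ∧ μ (B \ B') < ε ∧
      ∑' n : ℤ, μ (zimg f n B') ≠ ⊤

/-- A measurable system: `μ` σ-finite with `μ(X) > 0`, `f` bijective, bimeasurable,
nonsingular, and `μ(f⁻¹(B)) ≤ c·μ(B)` with `0 < c < ∞`. -/
def MeasSystem {X : Type*} [MeasurableSpace X] (μ : Measure X) (f : X → X) (c : ℝ≥0∞) : Prop :=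
  SigmaFinite μ ∧ 0 < μ Set.univ ∧ Function.Bijective f ∧ Measurable f ∧
  (∀ B : Set X, MeasurableSet B → MeasurableSet (f '' B)) ∧
  (∀ B : Set X, MeasurableSet B → (μ (f ⁻¹' B) = 0 ↔ μ B = 0)) ∧
  0 < c ∧ c ≠ ⊤ ∧ (∀ B : Set X, MeasurableSet B → μ (f ⁻¹' B) ≤ c * μ B)

/-- `f` is dissipative: there is a generating wandering set. -/
def Dissipative {X : Type*} [MeasurableSpace X] (f : X → X) : Prop :=
  ∃ W : Set X, MeasurableSet W ∧ Wandering f W ∧ GeneratedBy f W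

/-- A set of natural numbers has positive lower density. -/
def PosLowerDensity (A : Set ℕ) : Prop :=
  0 < Filter.liminf (fun N : ℕ => ((A ∩ Set.Icc 1 N).ncard : ℝ) / N) Filter.atTop

/-- `x` is a recurrent point of `f`. -/
def Recurrent {X : Type*} [TopologicalSpace X] (f : X → X) (x : X) : Prop :=
  ∀ U : Set X, IsOpen U → x ∈ U → ∃ n : ℕ, 1 ≤ n ∧ f^[n] x ∈ U

/-- A continuous linear operator is frequently hypercyclic. -/
def FreqHC {E : Type*} [NormedAddCommGroup E] [NormedSpace ℝ E] (T : E →L[ℝ] E) : Prop :=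
  ∃ φ : E, ∀ U : Set E, IsOpen U → U.Nonempty → PosLowerDensity {n : ℕ | (T ^ n) φ ∈ U}

/-- `d(W) = ‖dμ/dν |_W‖_∞⁻¹`, with the convention `1/∞ = 0`. -/
noncomputable def dSeq {X : Type*} [MeasurableSpace X] (μ ν : Measure X) (W : Set X) : ℝ≥0∞ :=
  (essSup (μ.rnDeriv ν) (μ.restrict W))⁻¹

section Aux
variable {X : Type*}

lemma zimg_eq (f : X → X) (hf : Function.Bijective f) (n : ℤ) (B : Set X) :
    zimg f n B = ⇑(Equiv.ofBijective f hf ^ n) '' B := by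
  set e := Equiv.ofBijective f hf with he
  have hco : ∀ k : ℕ, ⇑(e ^ k) = f^[k] := fun k => rfl
  rcases le_or_gt 0 n with h | h
  · rw [zimg, if_pos h, ← hco n.toNat, ← zpow_natCast, Int.toNat_of_nonneg h]
  · have hn : n = -((-n).toNat : ℤ) := by omega
    rw [zimg, if_neg (not_le.2 h), hn, zpow_neg, zpow_natCast, neg_neg, Int.toNat_natCast,
      ← hco, Equiv.image_eq_preimage_symm]
    rfl

lemma zpow_image_zpow_image (e : Equiv.Perm X) (m n : ℤ) (B : Set X) :
    ⇑(e ^ m) '' (⇑(e ^ n) '' B) = ⇑(e ^ (m + n)) '' B := by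
  rw [← Set.image_comp, ← Equiv.Perm.coe_mul, ← zpow_add]

lemma mem_zpow_image {e : Equiv.Perm X} {n : ℤ} {B : Set X} {x : X} :
    x ∈ ⇑(e ^ n) '' B ↔ ⇑(e ^ (-n)) x ∈ B := by
  rw [Set.mem_image_equiv, zpow_neg]
  rfl

lemma zpow_apply_zpow_apply (e : Equiv.Perm X) (m n : ℤ) (x : X) :
    ⇑(e ^ m) (⇑(e ^ n) x) = ⇑(e ^ (m + n)) x := by
  rw [← Equiv.Perm.mul_apply, ← zpow_add]

lemma measurableSet_zpow_image [MeasurableSpace X] {f : X → X} (hf : Function.Bijective f)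
    (hm : Measurable f) (himg : ∀ B : Set X, MeasurableSet B → MeasurableSet (f '' B))
    (n : ℤ) {B : Set X} (hB : MeasurableSet B) :
    MeasurableSet (⇑(Equiv.ofBijective f hf ^ n) '' B) := by
  rw [← zimg_eq]
  unfold zimg
  split
  · have : ∀ k : ℕ, MeasurableSet (f^[k] '' B) := by
      intro k
      induction k with
      | zero => simpa
      | succ k ih =>
        rw [Function.iterate_succ', Set.image_comp]
        exact himg _ ih
    exact this _
  · exact (hm.iterate _) hB

end Aux
set_option maxHeartbeats 1000000 in
/-- If a measurable system satisfies Condition (SC), then `f` is dissipative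
(up to a `μ`-null set). -/
theorem stmt_0 {X : Type*} [MeasurableSpace X] (μ : Measure X) (f : X → X) (c : ℝ≥0∞)
    (hsys : MeasSystem μ f c) (hSC : SCcond μ f) :
    ∃ W : Set X, MeasurableSet W ∧ Wandering f W ∧
      μ (Set.univ \ ⋃ n : ℤ, zimg f n W) = 0 := by
  classical
  obtain ⟨hsf, -, hbij, hmeas, himg, -, -, -, -⟩ := hsys
  haveI := hsf
  set e := Equiv.ofBijective f hbij with he
  have hco : ∀ k : ℕ, ⇑(e ^ (k : ℤ)) = f^[k] := fun k => by rw [zpow_natCast]; rfl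
  have hchoice : ∀ k j : ℕ, ∃ B' : Set X, B' ⊆ spanningSets μ k ∧ MeasurableSet B' ∧
      μ (spanningSets μ k \ B') < ((j : ℝ≥0∞) + 1)⁻¹ ∧ ∑' n : ℤ, μ (zimg f n B') ≠ ⊤ := by
    intro k j
    exact hSC _ (ENNReal.inv_pos.2 (by simp)) _ (measurableSet_spanningSets μ k)
      (measure_spanningSets_lt_top μ k)
  choose B' hsub hBmeas hBsmall hBsum using hchoice
  set A : ℕ → Set X := fun i => B' i.unpair.1 i.unpair.2 with hA
  have hAmeas : ∀ i, MeasurableSet (A i) := fun i => hBmeas _ _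
  have hAsum : ∀ i, ∑' n : ℤ, μ (⇑(e ^ n) '' A i) ≠ ⊤ := by
    intro i
    have h := hBsum i.unpair.1 i.unpair.2
    simpa only [zimg_eq f hbij] using h
  set Wb : ℕ → Set X := fun i => A i \ ⋃ k : ℕ, f^[k + 1] ⁻¹' A i with hWb
  have hWbA : ∀ i, Wb i ⊆ A i := fun i => diff_subset
  have hWbmeas : ∀ i, MeasurableSet (Wb i) := fun i =>
    (hAmeas i).diff (MeasurableSet.iUnion fun k => (hmeas.iterate (k + 1)) (hAmeas i))
  have hWbnot : ∀ i, ∀ x ∈ Wb i, ∀ d : ℤ, 0 < d → ⇑(e ^ d) x ∉ A i := by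
    intro i x hx d hd hmem
    have h1 : d = ((d.toNat - 1 + 1 : ℕ) : ℤ) := by omega
    rw [h1, hco] at hmem
    exact hx.2 (mem_iUnion.2 ⟨d.toNat - 1, hmem⟩)
  set S : ℕ → Set X := fun i => ⋃ n : ℤ, ⇑(e ^ n) '' Wb i with hS
  have hmemS : ∀ i x, x ∈ S i ↔ ∃ m : ℤ, ⇑(e ^ m) x ∈ Wb i := by
    intro i x
    simp only [hS, mem_iUnion, mem_zpow_image]
    exact ⟨fun ⟨n, h⟩ => ⟨-n, h⟩, fun ⟨m, h⟩ => ⟨-m, by simpa using h⟩⟩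
  have hSinv : ∀ i (n : ℤ) x, x ∈ S i → ⇑(e ^ n) x ∈ S i := by
    intro i n x hx
    obtain ⟨m, hm⟩ := (hmemS i x).1 hx
    refine (hmemS i _).2 ⟨m - n, ?_⟩
    rw [zpow_apply_zpow_apply, sub_add_cancel]
    exact hm
  have hWbS : ∀ i x, x ∈ Wb i → x ∈ S i := fun i x hx =>
    (hmemS i x).2 ⟨0, by simpa using hx⟩
  set W : Set X := ⋃ i : ℕ, (Wb i \ ⋃ j : ℕ, ⋃ _ : j < i, S j) with hW
  have hSmeas : ∀ i, MeasurableSet (S i) :=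
    fun i => MeasurableSet.iUnion fun n => measurableSet_zpow_image hbij hmeas himg n (hWbmeas i)
  have hWmeas : MeasurableSet W :=
    MeasurableSet.iUnion fun i => (hWbmeas i).diff
      (MeasurableSet.iUnion fun j => MeasurableSet.iUnion fun _ => hSmeas j)
  have hmemW : ∀ x, x ∈ W ↔ ∃ i, x ∈ Wb i ∧ ∀ j, j < i → x ∉ S j := by
    intro x
    constructor
    · intro hmem
      obtain ⟨i, hi⟩ := mem_iUnion.1 hmem
      exact ⟨i, hi.1, fun j hj hxS => hi.2 (mem_iUnion.2 ⟨j, mem_iUnion.2 ⟨hj, hxS⟩⟩)⟩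
    · rintro ⟨i, h1, h2⟩
      refine mem_iUnion.2 ⟨i, h1, ?_⟩
      intro hmem
      obtain ⟨j, hj⟩ := mem_iUnion.1 hmem
      obtain ⟨hji, hjS⟩ := mem_iUnion.1 hj
      exact h2 j hji hjS
  have hinvcancel : ∀ (n : ℤ) (x : X), ⇑(e ^ (-n)) (⇑(e ^ n) x) = x := by
    intro n x
    rw [zpow_apply_zpow_apply, neg_add_cancel, zpow_zero, Equiv.Perm.one_apply]
  have core : ∀ x y : X, x ∈ W → y ∈ W → ∀ d : ℤ, y = ⇑(e ^ d) x → d = 0 := by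
    intro x y hx hy d hd
    by_contra hd0
    obtain ⟨i, hxi, hxS⟩ := (hmemW x).1 hx
    obtain ⟨i', hyi, hyS⟩ := (hmemW y).1 hy
    rcases lt_trichotomy i i' with h | h | h
    · exact hyS i h (hd ▸ hSinv i d x (hWbS i x hxi))
    · subst h
      rcases lt_or_gt_of_ne hd0 with hneg | hpos
      · have hx' : x = ⇑(e ^ (-d)) y := by rw [hd, hinvcancel]
        exact hWbnot i y hyi (-d) (by omega) (hx' ▸ hWbA i hxi)
      · exact hWbnot i x hxi d hpos (hd ▸ hWbA i hyi)
    · have hx' : x = ⇑(e ^ (-d)) y := by rw [hd, hinvcancel]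
      exact hxS i' h (hx' ▸ hSinv i' (-d) y (hWbS i' y hyi))
  have hwand : Wandering f W := by
    intro m n hmn
    rw [Set.disjoint_left]
    intro z hzm hzn
    rw [zimg_eq f hbij] at hzm hzn
    obtain ⟨x, hxW, hx⟩ := hzm
    obtain ⟨y, hyW, hy⟩ := hzn
    have hyx : y = ⇑(e ^ (-n + m)) x := by
      have h := congrArg (⇑(e ^ (-n))) (hx.trans hy.symm)
      rw [hinvcancel, zpow_apply_zpow_apply] at h
      exact h.symm
    have := core x y hxW hyW _ hyx
    omega
  set Lim : ℕ → Set X := fun i => {x | {n : ℤ | ⇑(e ^ n) x ∈ A i}.Infinite} with hLim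
  have hLimnull : ∀ i, μ (Lim i) = 0 := by
    intro i
    have hbc := MeasureTheory.ae_finite_setOf_mem (μ := μ)
      (s := fun n : ℤ => ⇑(e ^ n) '' A i) (hAsum i)
    rw [ae_iff] at hbc
    refine measure_mono_null ?_ hbc
    intro x hx
    simp only [hLim, mem_setOf_eq] at hx ⊢
    have hEq : {n : ℤ | x ∈ ⇑(e ^ n) '' A i} = Neg.neg ⁻¹' {n : ℤ | ⇑(e ^ n) x ∈ A i} := by
      ext n
      simp [mem_zpow_image, Equiv.Perm.inv_def]
    rw [hEq]
    exact hx.preimage (fun n _ => ⟨-n, neg_neg n⟩)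
  have hnull1 : μ (univ \ ⋃ i, A i) = 0 := by
    have hsub1 : univ \ ⋃ i : ℕ, A i ⊆ ⋃ k : ℕ, (spanningSets μ k \ ⋃ j : ℕ, B' k j) := by
      intro x hx
      obtain ⟨-, hxA⟩ := hx
      have hx2 : x ∈ ⋃ k, spanningSets μ k := by rw [iUnion_spanningSets]; trivial
      obtain ⟨k, hk⟩ := mem_iUnion.1 hx2
      refine mem_iUnion.2 ⟨k, hk, ?_⟩
      intro hmem
      obtain ⟨j, hj⟩ := mem_iUnion.1 hmem
      exact hxA (mem_iUnion.2 ⟨Nat.pair k j, by simpa [hA, Nat.unpair_pair] using hj⟩)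
    refine measure_mono_null hsub1 (measure_iUnion_null fun k => ?_)
    by_contra h0
    obtain ⟨j, hj⟩ := ENNReal.exists_inv_nat_lt h0
    have h1 : μ (spanningSets μ k \ ⋃ j', B' k j') ≤ μ (spanningSets μ k \ B' k j) :=
      measure_mono (diff_subset_diff_right (subset_iUnion _ j))
    have h3 : ((j : ℝ≥0∞) + 1)⁻¹ ≤ ((j : ℝ≥0∞))⁻¹ := by
      gcongr
      exact le_self_add
    exact absurd (hj.trans_le (h1.trans (hBsmall k j).le |>.trans h3)) (lt_irrefl _)
  have hcover : univ \ (⋃ n : ℤ, zimg f n W) ⊆ (univ \ ⋃ i, A i) ∪ ⋃ i, Lim i := by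
    intro x hx
    obtain ⟨-, hxW⟩ := hx
    by_contra hcon
    obtain ⟨h1, h2⟩ := not_or.1 hcon
    have hxA : x ∈ ⋃ i, A i := by
      by_contra h
      exact h1 ⟨trivial, h⟩
    obtain ⟨i₀, hi₀⟩ := mem_iUnion.1 hxA
    have hfin : {n : ℤ | ⇑(e ^ n) x ∈ A i₀}.Finite := by
      by_contra h
      exact h2 (mem_iUnion.2 ⟨i₀, h⟩)
    have hne : hfin.toFinset.Nonempty := by
      refine ⟨0, ?_⟩
      rw [Set.Finite.mem_toFinset]
      simpa using hi₀
    set m := hfin.toFinset.max' hne with hm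
    have hymem : ⇑(e ^ m) x ∈ A i₀ := by
      have h := hfin.toFinset.max'_mem hne
      rwa [Set.Finite.mem_toFinset] at h
    have hyWb : ⇑(e ^ m) x ∈ Wb i₀ := by
      refine ⟨hymem, ?_⟩
      intro hmem
      obtain ⟨k, hk⟩ := mem_iUnion.1 hmem
      rw [mem_preimage, ← hco (k + 1), zpow_apply_zpow_apply] at hk
      have hmem2 : ((k : ℤ) + 1 + m) ∈ hfin.toFinset := by
        rw [Set.Finite.mem_toFinset]
        exact hk
      have := hfin.toFinset.le_max' _ hmem2
      omega
    have hex : ∃ i, x ∈ S i := ⟨i₀, (hmemS i₀ x).2 ⟨m, hyWb⟩⟩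
    obtain ⟨m', hm'⟩ := (hmemS (Nat.find hex) x).1 (Nat.find_spec hex)
    have hyW : ⇑(e ^ m') x ∈ W := by
      refine (hmemW _).2 ⟨Nat.find hex, hm', ?_⟩
      intro j hj hjS
      have hxSj : x ∈ S j := by
        have h := hSinv j (-m') _ hjS
        rwa [hinvcancel] at h
      exact Nat.find_min hex hj hxSj
    refine hxW (mem_iUnion.2 ⟨-m', ?_⟩)
    rw [zimg_eq f hbij, mem_zpow_image, neg_neg]
    exact hyW
  refine ⟨W, hWmeas, hwand, measure_mono_null hcover ?_⟩
  exact measure_union_null hnull1 (measure_iUnion_null hLimnull)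
end

section
/- Let (X, B, μ, f) be a measurable system with μ(X) < ∞. If f is dissipative, then f satisfies the Summability Condition (SC). -/
open MeasureTheory Set Filter
open scoped ENNReal NNReal Topology

lemma zimg_eq_perm {X : Type*} (f : X → X) (hf : Function.Bijective f) (n : ℤ) (B : Set X) :
    zimg f n B = ⇑((Equiv.ofBijective f hf) ^ n) '' B := by
  set e := Equiv.ofBijective f hf with he
  rcases le_or_gt 0 n with h | h
  · obtain ⟨m, rfl⟩ := Int.eq_ofNat_of_zero_le h
    rw [zimg, if_pos h, zpow_natCast, Equiv.Perm.coe_pow]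
    rfl
  · rw [zimg, if_neg (not_le.2 h)]
    have hm : n = -(((-n).toNat : ℕ) : ℤ) := by omega
    set m := (-n).toNat with hmdef
    rw [hm, zpow_neg, zpow_natCast]
    have h1 : ((e ^ m)⁻¹ : Equiv.Perm X) = (e ^ m).symm := rfl
    rw [h1, Equiv.image_eq_preimage_symm, Equiv.symm_symm, Equiv.Perm.coe_pow]
    rfl

lemma meas_zimg {X : Type*} [MeasurableSpace X] {f : X → X} (hm : Measurable f)
    (himg : ∀ B : Set X, MeasurableSet B → MeasurableSet (f '' B)) (n : ℤ)
    {B : Set X} (hB : MeasurableSet B) : MeasurableSet (zimg f n B) := by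
  unfold zimg; split
  · induction n.toNat with
    | zero => simpa using hB
    | succ k ih => rw [Function.iterate_succ', Set.image_comp]; exact himg _ ih
  · exact (hm.iterate _) hB

theorem stmt_1' {X : Type*} [MeasurableSpace X] (μ : Measure X) (f : X → X)
    (hbij : Function.Bijective f) (hmeas : Measurable f)
    (himg : ∀ B : Set X, MeasurableSet B → MeasurableSet (f '' B))
    (hfin : μ Set.univ ≠ ⊤)
    (W : Set X) (hW : MeasurableSet W) (hwand : Wandering f W) (hgen : GeneratedBy f W) :
    ∀ ε : ℝ≥0∞, 0 < ε → ∀ B : Set X, MeasurableSet B → μ B < ⊤ →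
    ∃ B' : Set X, B' ⊆ B ∧ MeasurableSet B' ∧ μ (B \ B') < ε ∧
      ∑' n : ℤ, μ (zimg f n B') ≠ ⊤ := by
  intro ε hε B hB _
  set e := Equiv.ofBijective f hbij with he
  set S : ℕ → Set X := fun N => B ∩ ⋃ n ∈ Finset.Icc (-(N : ℤ)) (N : ℤ), zimg f n W with hS
  have hSmeas : ∀ N, MeasurableSet (S N) := fun N =>
    hB.inter (Finset.measurableSet_biUnion _ fun n _ => meas_zimg hmeas himg n hW)
  have hSsub : ∀ N, S N ⊆ B := fun N => inter_subset_left
  have hUnion : (⋃ N, S N) = B := by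
    apply subset_antisymm (iUnion_subset fun N => inter_subset_left)
    intro x hx
    have hx2 : x ∈ ⋃ n : ℤ, zimg f n W := by rw [hgen]; trivial
    obtain ⟨n, hn⟩ := mem_iUnion.1 hx2
    exact mem_iUnion.2 ⟨n.natAbs, hx,
      mem_biUnion (show n ∈ Finset.Icc (-(n.natAbs : ℤ)) (n.natAbs : ℤ) from
        Finset.mem_Icc.2 ⟨by omega, by omega⟩) hn⟩
  have hanti : Antitone (fun N => B \ S N) := by
    intro a b hab
    apply diff_subset_diff_right
    apply inter_subset_inter_right
    refine iUnion₂_subset fun n hn => ?_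
    obtain ⟨h1, h2⟩ := Finset.mem_Icc.1 hn
    exact subset_iUnion₂ (s := fun n (_ : n ∈ Finset.Icc (-(b : ℤ)) (b : ℤ)) => zimg f n W) n
      (Finset.mem_Icc.2 ⟨by omega, by omega⟩)
  have htend : Tendsto (fun N => μ (B \ S N)) atTop (𝓝 (μ (⋂ N, B \ S N))) :=
    tendsto_measure_iInter_atTop
      (fun N => (hB.diff (hSmeas N)).nullMeasurableSet) hanti
      ⟨0, by exact ne_top_of_le_ne_top hfin (measure_mono (subset_univ _))⟩
  have hEmpty : (⋂ N, B \ S N) = (∅ : Set X) := by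
    rw [← Set.diff_iUnion, hUnion, diff_self]
  rw [hEmpty, measure_empty] at htend
  obtain ⟨N, hN⟩ := (htend.eventually (gt_mem_nhds hε)).exists
  refine ⟨S N, hSsub N, hSmeas N, hN, ?_⟩
  -- summability
  have hA : ∀ n : ℤ, ∑' k : ℤ, μ (zimg f k (B ∩ zimg f n W)) ≤ μ Set.univ := by
    intro n
    have hAmeas : ∀ k : ℤ, MeasurableSet (zimg f k (B ∩ zimg f n W)) :=
      fun k => meas_zimg hmeas himg k (hB.inter (meas_zimg hmeas himg n hW))
    have hsub : ∀ k : ℤ, zimg f k (B ∩ zimg f n W) ⊆ zimg f (k + n) W := by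
      intro k
      rw [zimg_eq_perm f hbij, zimg_eq_perm f hbij n, zimg_eq_perm f hbij (k + n),
        zpow_add, Equiv.Perm.coe_mul, Set.image_comp]
      exact image_mono inter_subset_right
    have hdisj : Pairwise (Function.onFun Disjoint
        fun k : ℤ => zimg f k (B ∩ zimg f n W)) := by
      intro k k' hkk'
      exact ((hwand (show k + n ≠ k' + n by omega)).mono (hsub k) (hsub k'))
    rw [← measure_iUnion hdisj hAmeas]
    exact measure_mono (subset_univ _)
  have hstep : ∀ k : ℤ, μ (zimg f k (S N)) ≤
      ∑ n ∈ Finset.Icc (-(N : ℤ)) (N : ℤ), μ (zimg f k (B ∩ zimg f n W)) := by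
    intro k
    have hSN : S N = ⋃ n ∈ Finset.Icc (-(N : ℤ)) (N : ℤ), (B ∩ zimg f n W) := by
      rw [hS]; exact inter_iUnion₂ _ _
    have himg2 : zimg f k (S N) =
        ⋃ n ∈ Finset.Icc (-(N : ℤ)) (N : ℤ), zimg f k (B ∩ zimg f n W) := by
      rw [zimg_eq_perm f hbij, hSN, image_iUnion₂]
      exact iUnion₂_congr fun n _ => (zimg_eq_perm f hbij k _).symm
    rw [himg2]
    exact measure_biUnion_finset_le _ _
  have htsum : ∑' k : ℤ, μ (zimg f k (S N)) ≤
      ∑ n ∈ Finset.Icc (-(N : ℤ)) (N : ℤ), ∑' k : ℤ, μ (zimg f k (B ∩ zimg f n W)) := by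
    rw [← Summable.tsum_finsetSum (fun n _ => ENNReal.summable)]
    exact ENNReal.tsum_le_tsum hstep
  refine ne_top_of_le_ne_top ?_ htsum
  refine (ENNReal.sum_lt_top.2 fun n _ => ?_).ne
  exact lt_of_le_of_lt (hA n) (lt_top_iff_ne_top.2 hfin)

/-- In a measurable system of finite measure, if `f` is dissipative then `f`
satisfies Condition (SC). -/
theorem stmt_1 {X : Type*} [MeasurableSpace X] (μ : Measure X) (f : X → X) (c : ℝ≥0∞)
    (hsys : MeasSystem μ f c) (hfin : μ Set.univ ≠ ⊤) (hdiss : Dissipative f) :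
    SCcond μ f := by
  obtain ⟨-, -, hbij, hmeas, himg, -, -, -, -⟩ := hsys
  obtain ⟨W, hW, hwand, hgen⟩ := hdiss
  exact stmt_1' μ f hbij hmeas himg hfin W hW hwand hgen
end

section
/- Let (X, B, μ, f) be a measurable system with constant c > 0 (i.e., μ(f⁻¹(B)) ≤ c μ(B) for all measurable B), and let W be a measurable set with 0 < μ(W) < ∞. Define d_n(W) = ‖ dμ/d(μ∘fⁿ) restricted to W ‖_∞^{-1} (with 1/∞ = 0). Then d_{n+1}(W) ≥ c^{-1} d_n(W) for all n ∈ ℤ. -/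
open MeasureTheory Set Filter
open scoped ENNReal NNReal

section Aux

variable {X : Type*} [MeasurableSpace X] {f : X → X}

lemma image_iterate_measurable (hf : ∀ B : Set X, MeasurableSet B → MeasurableSet (f '' B)) :
    ∀ (k : ℕ) (B : Set X), MeasurableSet B → MeasurableSet (f^[k] '' B) := by
  intro k
  induction k with
  | zero => intro B hB; simpa using hB
  | succ k ih =>
    intro B hB
    rw [Function.iterate_succ', Set.image_comp]
    exact hf _ (ih B hB)

lemma zimg_measurable (hm : Measurable f)
    (hf : ∀ B : Set X, MeasurableSet B → MeasurableSet (f '' B)) (n : ℤ) (B : Set X)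
    (hB : MeasurableSet B) : MeasurableSet (zimg f n B) := by
  unfold zimg
  split
  · exact image_iterate_measurable hf _ B hB
  · exact (hm.iterate _) hB

lemma preimage_zimg (hinj : Function.Injective f) (n : ℤ) (B : Set X) :
    f ⁻¹' (zimg f (n + 1) B) = zimg f n B := by
  unfold zimg
  rcases le_or_gt 0 n with hn | hn
  · rw [if_pos (by omega : (0:ℤ) ≤ n + 1), if_pos hn]
    have h1 : (n + 1).toNat = n.toNat + 1 := by omega
    rw [h1, Function.iterate_succ', Set.image_comp]
    exact Set.preimage_image_eq _ hinj
  · rcases eq_or_lt_of_le (by omega : n + 1 ≤ 0) with h0 | h0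
    · have hn1 : n = -1 := by omega
      subst hn1
      norm_num
    · rw [if_neg (by omega), if_neg (by omega)]
      have h1 : (-n).toNat = (-(n + 1)).toNat + 1 := by omega
      rw [h1, Function.iterate_succ]
      rfl

lemma zimg_zero_iff {μ : Measure X} (hm : Measurable f) (hinj : Function.Injective f)
    (hf : ∀ B : Set X, MeasurableSet B → MeasurableSet (f '' B))
    (hns : ∀ B : Set X, MeasurableSet B → (μ (f ⁻¹' B) = 0 ↔ μ B = 0)) (n : ℤ) (B : Set X)
    (hB : MeasurableSet B) : μ (zimg f n B) = 0 ↔ μ B = 0 := by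
  have himg : ∀ (k : ℕ) (B : Set X), MeasurableSet B → (μ (f^[k] '' B) = 0 ↔ μ B = 0) := by
    intro k
    induction k with
    | zero => intro B hB; simp
    | succ k ih =>
      intro B hB
      rw [Function.iterate_succ', Set.image_comp]
      have h1 := hns _ (hf _ (image_iterate_measurable hf k B hB))
      rw [Set.preimage_image_eq _ hinj] at h1
      rw [← h1, ih B hB]
  have hpre : ∀ (k : ℕ) (B : Set X), MeasurableSet B → (μ (f^[k] ⁻¹' B) = 0 ↔ μ B = 0) := by
    intro k
    induction k with
    | zero => intro B hB; simp
    | succ k ih =>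
      intro B hB
      rw [Function.iterate_succ, Set.preimage_comp]
      rw [hns _ ((hm.iterate k) hB)]
      exact ih B hB
  unfold zimg
  split
  · exact himg _ B hB
  · exact hpre _ B hB

lemma zimg_zimg_neg (hbij : Function.Bijective f) (n : ℤ) (B : Set X) :
    zimg f n (zimg f (-n) B) = B := by
  unfold zimg
  rcases lt_trichotomy n 0 with hn | hn | hn
  · rw [if_neg (by omega), if_pos (by omega)]
    rw [Set.preimage_image_eq _ (Function.Injective.iterate hbij.1 _)]
  · subst hn; simp
  · rw [if_pos (by omega), if_neg (by omega), neg_neg]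
    rw [Set.image_preimage_eq _ (Function.Surjective.iterate hbij.2 _)]

lemma zimg_univ (hbij : Function.Bijective f) (n : ℤ) : zimg f n (Set.univ : Set X) = Set.univ := by
  unfold zimg
  split
  · rw [Set.image_univ, Set.range_eq_univ.2 (Function.Surjective.iterate hbij.2 _)]
  · rfl

end Aux

/-- For a measurable system with constant `c` and `W` of finite positive
measure, the quantities `d_n(W) = ‖dμ/d(μ∘fⁿ)|_W‖_∞⁻¹` satisfy `d_{n+1}(W) ≥ c⁻¹ d_n(W)`. -/
theorem stmt_4 {X : Type*} [MeasurableSpace X] (μ : Measure X) (f : X → X) (c : ℝ≥0∞)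
    (hsys : MeasSystem μ f c) (W : Set X) (hWm : MeasurableSet W)
    (hW0 : 0 < μ W) (hWfin : μ W ≠ ⊤)
    (ν : ℤ → Measure X) (hν : ∀ (n : ℤ) (B : Set X), MeasurableSet B → ν n B = μ (zimg f n B)) :
    ∀ n : ℤ, c⁻¹ * dSeq μ (ν n) W ≤ dSeq μ (ν (n + 1)) W := by
  obtain ⟨hσ, -, hbij, hm, hf, hns, hc0, hcT, hcle⟩ := hsys
  haveI : SigmaFinite μ := hσ
  -- sigma-finiteness of each ν n
  haveI hνσ : ∀ n : ℤ, SigmaFinite (ν n) := by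
    intro n
    refine ⟨⟨⟨fun i => zimg f (-n) (spanningSets μ i), fun i => Set.mem_univ _, fun i => ?_,
      ?_⟩⟩⟩
    · rw [hν n _ (zimg_measurable hm hf _ _ (measurableSet_spanningSets μ i)),
        zimg_zimg_neg hbij]
      exact measure_spanningSets_lt_top μ i
    · have : zimg f (-n) (⋃ i, spanningSets μ i) = ⋃ i, zimg f (-n) (spanningSets μ i) := by
        unfold zimg; split
        · exact Set.image_iUnion
        · exact Set.preimage_iUnion
      rw [← this, iUnion_spanningSets, zimg_univ hbij]
  -- mutual absolute continuity
  have hμν : ∀ n : ℤ, μ ≪ ν n := by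
    intro n
    refine Measure.AbsolutelyContinuous.mk fun s hs h0 => ?_
    rw [hν n s hs] at h0
    exact (zimg_zero_iff hm hbij.1 hf hns n s hs).1 h0
  intro n
  -- ν n ≤ c • ν (n+1)
  have hle : ν n ≤ c • ν (n + 1) := by
    refine Measure.le_iff.2 fun s hs => ?_
    have hz : MeasurableSet (zimg f (n + 1) s) := zimg_measurable hm hf _ _ hs
    calc ν n s = μ (zimg f n s) := hν n s hs
    _ = μ (f ⁻¹' zimg f (n + 1) s) := by rw [preimage_zimg hbij.1]
    _ ≤ c * μ (zimg f (n + 1) s) := hcle _ hz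
    _ = (c • ν (n + 1)) s := by
        rw [Measure.smul_apply, smul_eq_mul, hν (n + 1) s hs]
  -- rnDeriv (ν n) (ν (n+1)) ≤ c a.e.
  have hrn_le : (ν n).rnDeriv (ν (n + 1)) ≤ᵐ[ν (n + 1)] fun _ => c := by
    refine ae_le_of_forall_setLIntegral_le_of_sigmaFinite
      (Measure.measurable_rnDeriv _ _) fun s hs _ => ?_
    rw [setLIntegral_const]
    calc ∫⁻ x in s, (ν n).rnDeriv (ν (n + 1)) x ∂(ν (n + 1)) ≤ ν n s :=
        Measure.setLIntegral_rnDeriv_le s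
    _ ≤ (c • ν (n + 1)) s := hle s
    _ = c * ν (n + 1) s := by rw [Measure.smul_apply, smul_eq_mul]
  -- chain rule
  have hchain := Measure.rnDeriv_mul_rnDeriv (ν := ν n) (κ := ν (n + 1)) (hμν n)
  have hptwise : μ.rnDeriv (ν (n + 1)) ≤ᵐ[ν (n + 1)] fun x => c * μ.rnDeriv (ν n) x := by
    filter_upwards [hchain, hrn_le] with x h1 h2
    rw [← h1, Pi.mul_apply, mul_comm]
    exact mul_le_mul_left h2 _
  have hptμ : μ.rnDeriv (ν (n + 1)) ≤ᵐ[μ] fun x => c * μ.rnDeriv (ν n) x :=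
    (hμν (n + 1)).ae_le hptwise
  have hptW : μ.rnDeriv (ν (n + 1)) ≤ᵐ[μ.restrict W] fun x => c * μ.rnDeriv (ν n) x :=
    ae_restrict_of_ae hptμ
  set a := essSup (μ.rnDeriv (ν n)) (μ.restrict W) with ha
  set b := essSup (μ.rnDeriv (ν (n + 1))) (μ.restrict W) with hb
  have hba : b ≤ c * a := by
    refine essSup_le_of_ae_le _ ?_
    filter_upwards [hptW, ENNReal.ae_le_essSup (μ := μ.restrict W) (μ.rnDeriv (ν n))]
      with x h1 h2
    exact h1.trans (mul_le_mul_right h2 _)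
  show c⁻¹ * a⁻¹ ≤ b⁻¹
  rw [← ENNReal.mul_inv (Or.inl hc0.ne') (Or.inl hcT)]
  exact ENNReal.inv_le_inv' hba
end

section
/- Let (α_n)_{n∈ℤ} be a sequence of non-negative real numbers such that there exists C > 0 with either α_{n+1} ≥ C α_n for all n ∈ ℤ, or α_n ≥ C α_{n+1} for all n ∈ ℤ. Suppose there exists a set A ⊆ ℤ of positive upper density such that the sums β_n = ∑_{m∈A} α_{m−n} are uniformly bounded for n ∈ A. Then ∑_{n∈ℤ} α_n < ∞. -/
open MeasureTheory Set Filter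
open scoped ENNReal NNReal

section BayartRuzsaAux

attribute [local instance] Classical.propDecidable


noncomputable def brT (A : Set ℤ) (N : ℕ) : Finset ℤ :=
  (Finset.Icc (-(N:ℤ)) (N:ℤ)).filter (fun n => n ∈ A)

noncomputable def brR (A : Set ℤ) (N : ℕ) (k : ℤ) : ℕ :=
  ((brT A N).filter (fun n => n + k ∈ brT A N)).card

lemma brIcc_card (N : ℕ) : (Finset.Icc (-(N:ℤ)) (N:ℤ)).card = 2*N+1 := by
  rw [Int.card_Icc]; omega

lemma brT_card_le (A : Set ℤ) (N : ℕ) : (brT A N).card ≤ 2*N+1 := by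
  classical
  calc (brT A N).card ≤ (Finset.Icc (-(N:ℤ)) (N:ℤ)).card := Finset.card_filter_le _ _
  _ = 2*N+1 := brIcc_card N

lemma brT_mem {A : Set ℤ} {N : ℕ} {n : ℤ} :
    n ∈ brT A N ↔ (-(N:ℤ) ≤ n ∧ n ≤ N) ∧ n ∈ A := by
  simp [brT, Finset.mem_filter, Finset.mem_Icc]

lemma brT_coe (A : Set ℤ) (N : ℕ) :
    ((brT A N : Finset ℤ) : Set ℤ) = A ∩ Set.Icc (-(N:ℤ)) (N:ℤ) := by
  ext x
  simp only [Finset.coe_filter, Set.mem_setOf_eq, Set.mem_inter_iff, Set.mem_Icc, brT,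
    Finset.mem_Icc]
  tauto

lemma br_ncard (A : Set ℤ) (N : ℕ) :
    (A ∩ Set.Icc (-(N:ℤ)) (N:ℤ)).ncard = (brT A N).card := by
  rw [← brT_coe A N, Set.ncard_coe_finset]

lemma brR_le (A : Set ℤ) (N : ℕ) (k : ℤ) : brR A N k ≤ (brT A N).card :=
  Finset.card_le_card (Finset.filter_subset _ _)

lemma brR_neg (A : Set ℤ) (N : ℕ) (k : ℤ) : brR A N (-k) = brR A N k := by
  classical
  have himg : ((brT A N).filter (fun n => n + -k ∈ brT A N)).image (fun n => n + -k)
      = (brT A N).filter (fun n => n + k ∈ brT A N) := by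
    ext m
    simp only [Finset.mem_image, Finset.mem_filter]
    constructor
    · rintro ⟨n, ⟨hn, hnk⟩, rfl⟩
      refine ⟨hnk, ?_⟩
      have : n + -k + k = n := by ring
      rw [this]; exact hn
    · rintro ⟨hm, hmk⟩
      exact ⟨m + k, ⟨hmk, by simpa using hm⟩, by ring⟩
  have hinj : Function.Injective (fun n : ℤ => n + -k) := add_left_injective _
  calc brR A N (-k) = ((brT A N).filter (fun n => n + -k ∈ brT A N)).card := rfl
    _ = (((brT A N).filter (fun n => n + -k ∈ brT A N)).image (fun n => n + -k)).card :=
        (Finset.card_image_of_injective _ hinj).symm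
    _ = brR A N k := by rw [himg]; rfl

lemma br_weighted (α : ℤ → ℝ) (hnn : ∀ n, 0 ≤ α n) (A : Set ℤ)
    (hconv : ∀ n ∈ A, Summable fun m : A => α ((m : ℤ) - n))
    (M : ℝ) (hbd : ∀ n ∈ A, (∑' m : A, α ((m : ℤ) - n)) ≤ M)
    (N : ℕ) (F : Finset ℤ) :
    ∑ k ∈ F, (brR A N k : ℝ) * α k ≤ M * (brT A N).card := by
  classical
  -- row bound
  have hrow : ∀ n ∈ brT A N, ∑ m ∈ brT A N, α (m - n) ≤ M := by
    intro n hn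
    have hnA : n ∈ A := (brT_mem.1 hn).2
    set emb : {x // x ∈ brT A N} ↪ A :=
      ⟨fun x => (⟨x.1, (brT_mem.1 x.2).2⟩ : A), by
        intro x y h
        exact Subtype.ext (Subtype.mk_eq_mk.mp h)⟩ with hemb
    have h1 : ∑ m ∈ ((brT A N).attach).map emb, α ((m : ℤ) - n)
        = ∑ m ∈ brT A N, α (m - n) := by
      rw [Finset.sum_map]
      exact Finset.sum_attach (brT A N) (fun m => α (m - n))
    have h2 : ∑ m ∈ ((brT A N).attach).map emb, α ((m : ℤ) - n)
        ≤ ∑' m : A, α ((m : ℤ) - n) :=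
      Summable.sum_le_tsum _ (fun i _ => hnn _) (hconv n hnA)
    rw [← h1]
    exact h2.trans (hbd n hnA)
  -- pairs sum
  have hpairs : ∑ p ∈ brT A N ×ˢ brT A N, α (p.2 - p.1) ≤ M * (brT A N).card := by
    rw [Finset.sum_product]
    calc ∑ n ∈ brT A N, ∑ m ∈ brT A N, α (m - n)
        ≤ ∑ _n ∈ brT A N, M := Finset.sum_le_sum hrow
      _ = M * (brT A N).card := by rw [Finset.sum_const, nsmul_eq_mul, mul_comm]
  -- rewrite LHS as a sum over a set of pairs
  set P : Finset (ℤ × ℤ) := (F ×ˢ brT A N).filter (fun p => p.2 + p.1 ∈ brT A N) with hP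
  have hL : ∑ k ∈ F, (brR A N k : ℝ) * α k = ∑ p ∈ P, α p.1 := by
    rw [hP, Finset.sum_filter, Finset.sum_product]
    apply Finset.sum_congr rfl
    intro k _
    show (brR A N k : ℝ) * α k = ∑ n ∈ brT A N, if n + k ∈ brT A N then α k else 0
    rw [← Finset.sum_filter]
    rw [Finset.sum_const, nsmul_eq_mul]
    rfl
  set e : ℤ × ℤ → ℤ × ℤ := fun p => (p.2, p.2 + p.1) with he
  have hinj : Function.Injective e := by
    intro p q hpq
    simp only [he, Prod.mk.injEq] at hpq
    obtain ⟨h1, h2⟩ := hpq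
    have : p.1 = q.1 := by omega
    exact Prod.ext this h1
  have himg : ∑ p ∈ P, α p.1 = ∑ q ∈ P.image e, α (q.2 - q.1) := by
    rw [Finset.sum_image (fun x _ y _ h => hinj h)]
    apply Finset.sum_congr rfl
    intro p _
    simp [he]
  have hsub : P.image e ⊆ brT A N ×ˢ brT A N := by
    intro q hq
    simp only [Finset.mem_image] at hq
    obtain ⟨p, hp, rfl⟩ := hq
    rw [hP, Finset.mem_filter, Finset.mem_product] at hp
    simp only [he, Finset.mem_product]
    exact ⟨hp.1.2, hp.2⟩
  rw [hL, himg]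
  refine le_trans (Finset.sum_le_sum_of_subset_of_nonneg hsub ?_) hpairs
  intro q _ _
  exact hnn _

lemma br_cs (A : Set ℤ) (N : ℕ) (E : Finset ℤ) (K : ℕ) (hK : ∀ e ∈ E, e.natAbs ≤ K) :
    (E.card * (brT A N).card)^2
      ≤ (2*(N+K)+1) * ∑ p ∈ E ×ˢ E, brR A N (p.2 - p.1) := by
  classical
  set X : Finset ℤ := Finset.Icc (-((N:ℤ)+K)) ((N:ℤ)+K) with hX
  have hXcard : X.card = 2*(N+K)+1 := by
    rw [hX, Int.card_Icc]; omega
  set g : ℤ → ℕ := fun x => (E.filter (fun e => x + e ∈ brT A N)).card with hg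
  -- fiber identity
  have hfib : ∀ e ∈ E, (X.filter (fun x => x + e ∈ brT A N)).card = (brT A N).card := by
    intro e he
    have heK : -(K:ℤ) ≤ e ∧ e ≤ K := by
      have := hK e he; omega
    have himg : (X.filter (fun x => x + e ∈ brT A N)).image (fun x => x + e) = brT A N := by
      ext m
      simp only [Finset.mem_image, Finset.mem_filter, hX, Finset.mem_Icc]
      constructor
      · rintro ⟨x, ⟨_, hxT⟩, rfl⟩; exact hxT
      · intro hm
        have hm' := (brT_mem.1 hm).1
        exact ⟨m - e, ⟨by omega, by simpa using hm⟩, by ring⟩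
    rw [← Finset.card_image_of_injective _ (add_left_injective e), himg]
  have hid1 : ∑ x ∈ X, g x = E.card * (brT A N).card := by
    have : ∀ x, g x = ∑ e ∈ E, if x + e ∈ brT A N then 1 else 0 := by
      intro x; rw [hg]; exact Finset.card_filter _ _
    calc ∑ x ∈ X, g x = ∑ x ∈ X, ∑ e ∈ E, if x + e ∈ brT A N then 1 else 0 := by
          apply Finset.sum_congr rfl; intro x _; exact this x
      _ = ∑ e ∈ E, ∑ x ∈ X, if x + e ∈ brT A N then 1 else 0 := Finset.sum_comm
      _ = ∑ e ∈ E, (X.filter (fun x => x + e ∈ brT A N)).card := by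
          apply Finset.sum_congr rfl; intro e _; exact (Finset.card_filter _ _).symm
      _ = ∑ _e ∈ E, (brT A N).card := by
          apply Finset.sum_congr rfl; intro e he; exact hfib e he
      _ = E.card * (brT A N).card := by rw [Finset.sum_const, smul_eq_mul]
  -- second identity
  have hfib2 : ∀ e ∈ E, ∀ e' ∈ E,
      (X.filter (fun x => x + e ∈ brT A N ∧ x + e' ∈ brT A N)).card = brR A N (e' - e) := by
    intro e he e' _
    have heK : -(K:ℤ) ≤ e ∧ e ≤ K := by have := hK e he; omega
    have himg : (X.filter (fun x => x + e ∈ brT A N ∧ x + e' ∈ brT A N)).image (fun x => x + e)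
        = (brT A N).filter (fun n => n + (e' - e) ∈ brT A N) := by
      ext m
      simp only [Finset.mem_image, Finset.mem_filter, hX, Finset.mem_Icc]
      constructor
      · rintro ⟨x, ⟨_, hxT, hxT'⟩, rfl⟩
        refine ⟨hxT, ?_⟩
        have : x + e + (e' - e) = x + e' := by ring
        rw [this]; exact hxT'
      · rintro ⟨hm, hm'⟩
        have hmIcc := (brT_mem.1 hm).1
        refine ⟨m - e, ⟨by omega, by simpa using hm, ?_⟩, by ring⟩
        have : m - e + e' = m + (e' - e) := by ring
        rw [this]; exact hm'
    rw [← Finset.card_image_of_injective _ (add_left_injective e), himg]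
    rfl
  have hid2 : ∑ x ∈ X, (g x)^2 = ∑ p ∈ E ×ˢ E, brR A N (p.2 - p.1) := by
    have hgx : ∀ x, (g x)^2
        = ∑ e ∈ E, ∑ e' ∈ E, if (x + e ∈ brT A N ∧ x + e' ∈ brT A N) then 1 else 0 := by
      intro x
      have hcf : g x = ∑ e ∈ E, if x + e ∈ brT A N then 1 else 0 := Finset.card_filter _ _
      rw [sq, hcf, Finset.sum_mul_sum]
      apply Finset.sum_congr rfl; intro e _
      apply Finset.sum_congr rfl; intro e' _
      by_cases h1 : x + e ∈ brT A N <;> by_cases h2 : x + e' ∈ brT A N <;> simp [h1, h2]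
    calc ∑ x ∈ X, (g x)^2
        = ∑ x ∈ X, ∑ e ∈ E, ∑ e' ∈ E, if (x + e ∈ brT A N ∧ x + e' ∈ brT A N) then 1 else 0 := by
          apply Finset.sum_congr rfl; intro x _; exact hgx x
      _ = ∑ e ∈ E, ∑ e' ∈ E, ∑ x ∈ X, if (x + e ∈ brT A N ∧ x + e' ∈ brT A N) then 1 else 0 := by
          rw [Finset.sum_comm]
          apply Finset.sum_congr rfl; intro e _
          exact Finset.sum_comm
      _ = ∑ e ∈ E, ∑ e' ∈ E, brR A N (e' - e) := by
          apply Finset.sum_congr rfl; intro e he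
          apply Finset.sum_congr rfl; intro e' he'
          rw [← hfib2 e he e' he', Finset.card_filter]
      _ = ∑ p ∈ E ×ˢ E, brR A N (p.2 - p.1) := by rw [Finset.sum_product]
  calc (E.card * (brT A N).card)^2 = (∑ x ∈ X, g x)^2 := by rw [hid1]
    _ ≤ X.card * ∑ x ∈ X, (g x)^2 := sq_sum_le_card_mul_sum_sq
    _ = (2*(N+K)+1) * ∑ p ∈ E ×ˢ E, brR A N (p.2 - p.1) := by rw [hXcard, hid2]

noncomputable def brSeq (pick : ℕ → ℤ) : ℕ → ℤ
  | 0 => 0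
  | (m+1) => brSeq pick m + pick ((brSeq pick m).toNat)

set_option maxHeartbeats 2000000 in
lemma br_main (α : ℤ → ℝ) (hnn : ∀ n, 0 ≤ α n) (C : ℝ) (hC : 0 < C) (hC1 : C ≤ 1)
    (hmono : ∀ n : ℤ, C * α n ≤ α (n + 1))
    (A : Set ℤ)
    (hA : 0 < Filter.limsup
      (fun N : ℕ => ((A ∩ Set.Icc (-(N : ℤ)) (N : ℤ)).ncard : ℝ) / (2 * N + 1)) Filter.atTop)
    (hconv : ∀ n ∈ A, Summable fun m : A => α ((m : ℤ) - n))
    (M : ℝ) (hbd : ∀ n ∈ A, (∑' m : A, α ((m : ℤ) - n)) ≤ M) :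
    Summable α := by
  classical
  -- growth lemma
  have hgrow : ∀ (n : ℕ) (i : ℤ), C^n * α i ≤ α (i + n) := by
    intro n
    induction n with
    | zero => intro i; simp
    | succ n ih =>
      intro i
      calc C^(n+1) * α i = C^n * (C * α i) := by ring
        _ ≤ C^n * α (i+1) := mul_le_mul_of_nonneg_left (hmono i) (pow_nonneg hC.le n)
        _ ≤ α (i + 1 + n) := ih (i+1)
        _ = α (i + (n+1)) := by congr 1; push_cast; ring
  -- density setup
  set dens : ℕ → ℝ :=
    fun N => ((A ∩ Set.Icc (-(N : ℤ)) (N : ℤ)).ncard : ℝ) / (2 * N + 1) with hdensdef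
  have hdens0 : ∀ N, 0 ≤ dens N := by
    intro N; rw [hdensdef]; positivity
  set del : ℝ := Filter.limsup dens Filter.atTop / 2 with hdeldef
  have hdel : 0 < del := by rw [hdeldef]; exact half_pos hA
  have hdlt : del < Filter.limsup dens Filter.atTop := by
    rw [hdeldef]; exact half_lt_self hA
  have hcob : IsCoboundedUnder (· ≤ ·) Filter.atTop dens :=
    isCoboundedUnder_le_of_le Filter.atTop (x := 0) hdens0
  have hfreq : ∃ᶠ N in Filter.atTop, del < dens N :=
    Filter.frequently_lt_of_lt_limsup hcob hdlt
  set G : Filter ℕ := Filter.atTop ⊓ Filter.principal {N | del < dens N} with hGdef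
  haveI hG : G.NeBot := by
    rw [hGdef]
    rw [Filter.inf_principal_neBot_iff]
    intro U hU
    obtain ⟨N, hNU, hNd⟩ := Filter.frequently_iff.mp hfreq hU
    exact ⟨N, hNU, hNd⟩
  set U : Ultrafilter ℕ := Ultrafilter.of G with hUdef
  have hUG : (U : Filter ℕ) ≤ G := Ultrafilter.of_le G
  have hUtop : (U : Filter ℕ) ≤ Filter.atTop := hUG.trans inf_le_left
  have hUdens : ∀ᶠ N in (U : Filter ℕ), del < dens N := by
    have h1 : (U : Filter ℕ) ≤ Filter.principal {N | del < dens N} := hUG.trans inf_le_right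
    exact Filter.le_principal_iff.mp h1
  set sN : ℕ → ℝ := fun N => ((brT A N).card : ℝ) with hsNdef
  have h1N : ∀ N : ℕ, (0:ℝ) < 2*N+1 := by intro N; positivity
  have hsle : ∀ N, sN N ≤ 2*N+1 := by
    intro N
    rw [hsNdef]
    calc ((brT A N).card : ℝ) ≤ ((2*N+1 : ℕ) : ℝ) := Nat.cast_le.mpr (brT_card_le A N)
      _ = 2*N+1 := by push_cast; ring
  have hUs : ∀ᶠ N in (U : Filter ℕ), del * (2*N+1) ≤ sN N := by
    filter_upwards [hUdens] with N h
    have : dens N = sN N / (2*N+1) := by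
      show ((A ∩ Set.Icc (-(N:ℤ)) (N:ℤ)).ncard : ℝ) / (2 * N + 1)
        = ((brT A N).card : ℝ) / (2*N+1)
      rw [br_ncard]
    rw [this] at h
    exact ((lt_div_iff₀ (h1N N)).mp h).le
  -- the correlation limits
  set ψ : ℕ → ℤ → ℝ := fun N k => (brR A N k : ℝ)/(2*N+1) with hψdef
  have hψ0 : ∀ N k, 0 ≤ ψ N k := by intro N k; rw [hψdef]; positivity
  have hψ1 : ∀ N k, ψ N k ≤ 1 := by
    intro N k
    rw [hψdef, div_le_one (h1N N)]
    calc ((brR A N k : ℕ) : ℝ) ≤ sN N := by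
          show ((brR A N k : ℕ) : ℝ) ≤ ((brT A N).card : ℝ)
          exact_mod_cast brR_le A N k
      _ ≤ 2*N+1 := hsle N
  have hlim : ∀ k : ℤ, ∃ a, a ∈ Set.Icc (0:ℝ) 1 ∧
      Filter.Tendsto (fun N => ψ N k) (U : Filter ℕ) (nhds a) := by
    intro k
    have hle : ↑(U.map (fun N => ψ N k)) ≤ Filter.principal (Set.Icc (0:ℝ) 1) := by
      rw [Ultrafilter.coe_map, Filter.le_principal_iff, Filter.mem_map]
      exact Filter.univ_mem' (fun N => ⟨hψ0 N k, hψ1 N k⟩)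
    obtain ⟨a, haI, hale⟩ := (isCompact_Icc (a := (0:ℝ)) (b := 1)).ultrafilter_le_nhds _ hle
    refine ⟨a, haI, ?_⟩
    rwa [Ultrafilter.coe_map] at hale
  choose sig hsigI hsigT using hlim
  have hψneg : ∀ N k, ψ N (-k) = ψ N k := by
    intro N k; rw [hψdef]; simp [brR_neg]
  have hsymm : ∀ k, sig (-k) = sig k := by
    intro k
    have h1 : Filter.Tendsto (fun N => ψ N k) (U : Filter ℕ) (nhds (sig (-k))) := by
      have h2 := hsigT (-k)
      have h3 : (fun N => ψ N (-k)) = fun N => ψ N k := funext (fun N => hψneg N k)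
      rwa [h3] at h2
    exact tendsto_nhds_unique h1 (hsigT k)
  -- sigma Cauchy-Schwarz
  have hCS : ∀ E : Finset ℤ,
      (E.card:ℝ)^2 * del^2 ≤ ∑ p ∈ E ×ˢ E, sig (p.2 - p.1) := by
    intro E
    set K : ℕ := E.sup Int.natAbs with hKdef
    have hK : ∀ e ∈ E, e.natAbs ≤ K := fun e he => Finset.le_sup he
    have hcsR : ∀ N:ℕ, ((E.card:ℝ) * sN N)^2
        ≤ (2*((N:ℝ)+K)+1) * ∑ p ∈ E ×ˢ E, (brR A N (p.2-p.1):ℝ) := by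
      intro N
      have h0 := br_cs A N E K hK
      have h1 := (Nat.cast_le (α := ℝ)).mpr h0
      push_cast at h1
      calc ((E.card:ℝ) * sN N)^2 = ((E.card:ℝ) * ((brT A N).card:ℝ))^2 := rfl
        _ ≤ (2*((N:ℝ)+K)+1) * ∑ p ∈ E ×ˢ E, (brR A N (p.2-p.1):ℝ) := h1
    have hev : ∀ᶠ (N : ℕ) in (U : Filter ℕ),
        (E.card:ℝ)^2*del^2 * ((2*(N:ℝ)+1)/(2*((N:ℝ)+K)+1))
          ≤ ∑ p ∈ E ×ˢ E, ψ N (p.2-p.1) := by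
      filter_upwards [hUs] with N hs
      have hpos1 : (0:ℝ) < 2*N+1 := h1N N
      have hpos2 : (0:ℝ) < 2*((N:ℝ)+K)+1 := by positivity
      have hsum : ∑ p ∈ E ×ˢ E, ψ N (p.2-p.1)
          = (∑ p ∈ E ×ˢ E, (brR A N (p.2-p.1):ℝ))/(2*(N:ℝ)+1) := by
        rw [Finset.sum_div]
      rw [hsum, le_div_iff₀ hpos1]
      have h2 : ((E.card:ℝ)*(del*(2*N+1)))^2 ≤ ((E.card:ℝ) * sN N)^2 := by
        apply pow_le_pow_left₀ (by positivity)
        exact mul_le_mul_of_nonneg_left hs (by positivity)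
      have hLHS : (E.card:ℝ)^2*del^2*((2*(N:ℝ)+1)/(2*((N:ℝ)+K)+1))*(2*(N:ℝ)+1)
          = ((E.card:ℝ)*(del*(2*(N:ℝ)+1)))^2/(2*((N:ℝ)+K)+1) := by
        field_simp
      rw [hLHS, div_le_iff₀ hpos2]
      calc ((E.card:ℝ)*(del*(2*(N:ℝ)+1)))^2 ≤ ((E.card:ℝ) * sN N)^2 := h2
        _ ≤ (2*((N:ℝ)+K)+1) * ∑ p ∈ E ×ˢ E, (brR A N (p.2-p.1):ℝ) := hcsR N
        _ = (∑ p ∈ E ×ˢ E, (brR A N (p.2-p.1):ℝ)) * (2*((N:ℝ)+K)+1) := mul_comm _ _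
    have hden : Filter.Tendsto (fun N:ℕ => 2*((N:ℝ)+K)+1) Filter.atTop Filter.atTop := by
      apply Filter.tendsto_atTop_mono (fun N => ?_) tendsto_natCast_atTop_atTop
      have hK0 : (0:ℝ) ≤ (K:ℝ) := by positivity
      have hN0 : (0:ℝ) ≤ (N:ℝ) := by positivity
      linarith
    have hfrac : Filter.Tendsto (fun N:ℕ => (2*(N:ℝ)+1)/(2*((N:ℝ)+K)+1))
        Filter.atTop (nhds 1) := by
      have h0 : Filter.Tendsto (fun N:ℕ => (2*(K:ℝ))/(2*((N:ℝ)+K)+1))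
          Filter.atTop (nhds 0) := Filter.Tendsto.div_atTop tendsto_const_nhds hden
      have heq : (fun N:ℕ => (2*(N:ℝ)+1)/(2*((N:ℝ)+K)+1))
          = fun N:ℕ => 1 - (2*(K:ℝ))/(2*((N:ℝ)+K)+1) := by
        funext N
        have hpos2 : (0:ℝ) < 2*((N:ℝ)+K)+1 := by positivity
        field_simp
        ring
      rw [heq]
      have := tendsto_const_nhds (x := (1:ℝ)) (f := Filter.atTop (α := ℕ)) |>.sub h0
      simpa using this
    have hT1 : Filter.Tendsto
        (fun N:ℕ => (E.card:ℝ)^2*del^2 * ((2*(N:ℝ)+1)/(2*((N:ℝ)+K)+1)))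
        (U : Filter ℕ) (nhds ((E.card:ℝ)^2*del^2 * 1)) :=
      (hfrac.mono_left hUtop).const_mul _
    have hT2 : Filter.Tendsto (fun N => ∑ p ∈ E ×ˢ E, ψ N (p.2-p.1)) (U : Filter ℕ)
        (nhds (∑ p ∈ E ×ˢ E, sig (p.2-p.1))) :=
      tendsto_finset_sum _ (fun p _ => hsigT _)
    have := le_of_tendsto_of_tendsto hT1 hT2 hev
    simpa using this
  -- nonnegativity of M
  have hM0 : 0 ≤ M := by
    obtain ⟨N, hN⟩ := hUs.exists
    have hcard : 0 < sN N := lt_of_lt_of_le (by positivity) hN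
    have hpos : 0 < (brT A N).card := by
      exact_mod_cast (show (0:ℝ) < ((brT A N).card : ℝ) from hcard)
    obtain ⟨n, hn⟩ := Finset.card_pos.mp hpos
    have hnA : n ∈ A := (brT_mem.1 hn).2
    exact le_trans (tsum_nonneg (fun m => hnn _)) (hbd n hnA)
  -- sigma Fatou
  have hFatou : ∀ F : Finset ℤ, ∑ k ∈ F, sig k * α k ≤ M := by
    intro F
    have hev : ∀ N : ℕ, ∑ k ∈ F, ψ N k * α k ≤ M := by
      intro N
      have hw := br_weighted α hnn A hconv M hbd N F
      have hsum : ∑ k ∈ F, ψ N k * α k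
          = (∑ k ∈ F, (brR A N k:ℝ) * α k)/(2*(N:ℝ)+1) := by
        rw [Finset.sum_div]
        apply Finset.sum_congr rfl
        intro k _
        show (brR A N k : ℝ)/(2*(N:ℝ)+1) * α k = (brR A N k:ℝ) * α k / (2*(N:ℝ)+1)
        ring
      rw [hsum, div_le_iff₀ (h1N N)]
      calc ∑ k ∈ F, (brR A N k:ℝ) * α k ≤ M * sN N := hw
        _ ≤ M * (2*(N:ℝ)+1) := mul_le_mul_of_nonneg_left (hsle N) hM0
    have hT : Filter.Tendsto (fun N => ∑ k ∈ F, ψ N k * α k) (U : Filter ℕ)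
        (nhds (∑ k ∈ F, sig k * α k)) :=
      tendsto_finset_sum _ (fun k _ => (hsigT k).mul_const _)
    exact le_of_tendsto' hT hev
  -- constants
  set c : ℝ := del^2/2 with hcdef
  have hc : 0 < c := by rw [hcdef]; positivity
  set hh : ℕ := ⌈(2:ℝ)/del^2⌉₊ + 1 with hhdef
  have hhgt : 2/del^2 < (hh:ℝ) := by
    rw [hhdef]
    push_cast
    have := Nat.le_ceil ((2:ℝ)/del^2)
    linarith
  -- good pair in any hh-element set
  have hgood : ∀ E : Finset ℤ, E.card = hh →
      ∃ p ∈ E ×ˢ E, p.1 ≠ p.2 ∧ c ≤ sig (p.2 - p.1) := by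
    intro E hcard
    by_contra hcon
    push_neg at hcon
    have hdiag : ∑ p ∈ (E ×ˢ E).filter (fun p => p.1 = p.2), sig (p.2-p.1) ≤ (hh:ℝ) := by
      have hb : ∀ p ∈ (E ×ˢ E).filter (fun p => p.1 = p.2), sig (p.2-p.1) ≤ 1 :=
        fun p _ => (hsigI _).2
      calc ∑ p ∈ (E ×ˢ E).filter (fun p => p.1 = p.2), sig (p.2-p.1)
          ≤ ((E ×ˢ E).filter (fun p => p.1 = p.2)).card • (1:ℝ) :=
            Finset.sum_le_card_nsmul _ _ 1 hb
        _ = (((E ×ˢ E).filter (fun p => p.1 = p.2)).card : ℝ) := by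
            rw [nsmul_eq_mul, mul_one]
        _ ≤ (hh:ℝ) := by
            rw [← hcard]
            apply Nat.cast_le.mpr
            apply Finset.card_le_card_of_injOn Prod.fst
            · intro p hp
              exact (Finset.mem_product.mp (Finset.mem_filter.mp hp).1).1
            · intro p hp q hq hpq
              have hp2 := (Finset.mem_filter.mp (Finset.mem_coe.mp hp)).2
              have hq2 := (Finset.mem_filter.mp (Finset.mem_coe.mp hq)).2
              exact Prod.ext hpq (by rw [← hp2, ← hq2, hpq])
    have hoff : ∑ p ∈ (E ×ˢ E).filter (fun p => ¬ p.1 = p.2), sig (p.2-p.1)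
        ≤ (hh:ℝ)^2 * c := by
      have hb : ∀ p ∈ (E ×ˢ E).filter (fun p => ¬ p.1 = p.2), sig (p.2-p.1) ≤ c := by
        intro p hp
        obtain ⟨hp1, hp2⟩ := Finset.mem_filter.mp hp
        exact (hcon p hp1 hp2).le
      calc ∑ p ∈ (E ×ˢ E).filter (fun p => ¬ p.1 = p.2), sig (p.2-p.1)
          ≤ ((E ×ˢ E).filter (fun p => ¬ p.1 = p.2)).card • c :=
            Finset.sum_le_card_nsmul _ _ c hb
        _ = (((E ×ˢ E).filter (fun p => ¬ p.1 = p.2)).card : ℝ) * c := nsmul_eq_mul _ _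
        _ ≤ (hh:ℝ)^2 * c := by
            apply mul_le_mul_of_nonneg_right ?_ hc.le
            have h1 : ((E ×ˢ E).filter (fun p => ¬ p.1 = p.2)).card ≤ (E ×ˢ E).card :=
              Finset.card_filter_le _ _
            have h2 : (E ×ˢ E).card = hh * hh := by rw [Finset.card_product, hcard]
            calc (((E ×ˢ E).filter (fun p => ¬ p.1 = p.2)).card : ℝ)
                ≤ ((hh*hh : ℕ) : ℝ) := Nat.cast_le.mpr (h2 ▸ h1)
              _ = (hh:ℝ)^2 := by push_cast; ring
    have hCS2 := hCS E
    rw [hcard] at hCS2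
    rw [← Finset.sum_filter_add_sum_filter_not (E ×ˢ E) (fun p => p.1 = p.2)
      (fun p => sig (p.2 - p.1))] at hCS2
    have hhpos : (0:ℝ) < (hh:ℝ) := by
      have : 0 < hh := by rw [hhdef]; omega
      exact_mod_cast this
    have h2lt : 2 < (hh:ℝ) * del^2 := by
      rw [div_lt_iff₀ (by positivity : (0:ℝ) < del^2)] at hhgt
      linarith
    have hkey : 2 * (hh:ℝ) < (hh:ℝ)^2 * del^2 := by
      have := mul_lt_mul_of_pos_left h2lt hhpos
      nlinarith
    have hceq : c = del^2/2 := hcdef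
    rw [hceq] at hoff
    linarith
  -- syndeticity
  have hsynd : ∃ L : ℕ, ∀ x : ℤ, 1 ≤ x → ∃ d : ℤ, x ≤ d ∧ d ≤ x + L ∧ c ≤ sig d := by
    by_contra hno
    push_neg at hno
    choose pick hpick using hno
    have hbs : ∀ m, brSeq pick (m+1) = brSeq pick m + pick ((brSeq pick m).toNat) :=
      fun m => rfl
    have hb0 : brSeq pick 0 = 0 := rfl
    have hsm : StrictMono (brSeq pick) := by
      apply strictMono_nat_of_lt_succ
      intro m
      have h1 := (hpick ((brSeq pick m).toNat)).1
      rw [hbs]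
      linarith
    have hbnn : ∀ m, 0 ≤ brSeq pick m := by
      intro m
      rw [← hb0]
      exact hsm.monotone (Nat.zero_le m)
    have hpairs : ∀ i m : ℕ, i ≤ m → sig (brSeq pick (m+1) - brSeq pick i) < c := by
      intro i m him
      have h1 : brSeq pick i ≤ brSeq pick m := hsm.monotone him
      have h2 : 0 ≤ brSeq pick m := hbnn m
      have h4 := (hpick ((brSeq pick m).toNat)).1
      have h3 : ((brSeq pick m).toNat : ℤ) = brSeq pick m := Int.toNat_of_nonneg h2
      apply (hpick ((brSeq pick m).toNat)).2
      · rw [hbs]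
        linarith
      · have h5 := hbnn i
        rw [hbs, h3]
        linarith
    obtain ⟨p, hpmem, hpne, hpc⟩ := hgood ((Finset.range hh).image (brSeq pick))
      (by rw [Finset.card_image_of_injective _ hsm.injective, Finset.card_range])
    rw [Finset.mem_product] at hpmem
    obtain ⟨i, hi, hip⟩ := Finset.mem_image.mp hpmem.1
    obtain ⟨j, hj, hjp⟩ := Finset.mem_image.mp hpmem.2
    have hij : i ≠ j := by
      intro hEq
      apply hpne
      rw [← hip, ← hjp, hEq]
    rcases Nat.lt_or_ge i j with hlt | hge
    · have h1 := hpairs i (j-1) (by omega)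
      rw [show j - 1 + 1 = j from by omega] at h1
      rw [← hip, ← hjp] at hpc
      linarith
    · have hlt2 : j < i := by omega
      have h1 := hpairs j (i-1) (by omega)
      rw [show i - 1 + 1 = i from by omega] at h1
      have hss : sig (brSeq pick j - brSeq pick i) = sig (brSeq pick i - brSeq pick j) := by
        rw [show brSeq pick j - brSeq pick i = -(brSeq pick i - brSeq pick j) from by ring,
          hsymm]
      rw [← hip, ← hjp, hss] at hpc
      linarith
  obtain ⟨L, hL⟩ := hsynd
  set W : ℕ := 2*L+1 with hWdef
  have hcover : ∀ k : ℤ, ∃ d : ℤ, k ≤ d ∧ d ≤ k + W ∧ c ≤ sig d := by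
    intro k
    rcases le_or_gt 1 k with h1 | h1
    · obtain ⟨d, hd1, hd2, hd3⟩ := hL k h1
      refine ⟨d, hd1, ?_, hd3⟩
      rw [hWdef]
      push_cast
      omega
    · rcases le_or_gt k (-(L:ℤ) - 1) with h2 | h2
      · obtain ⟨d', hd1, hd2, hd3⟩ := hL (-k - L) (by omega)
        refine ⟨-d', by omega, ?_, by rw [hsymm]; exact hd3⟩
        rw [hWdef]
        push_cast
        omega
      · obtain ⟨d, hd1, hd2, hd3⟩ := hL 1 le_rfl
        refine ⟨d, by omega, ?_, hd3⟩
        rw [hWdef]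
        push_cast
        omega
  choose dfun hdf1 hdf2 hdf3 using hcover
  -- final bound on partial sums
  have hCW : (0:ℝ) < C^W := pow_pos hC W
  have hBdd : ∀ F : Finset ℤ, ∑ k ∈ F, α k ≤ ((W:ℝ)+1) * (M/c) / C^W := by
    intro F
    have hstep : ∀ k : ℤ, C^W * α k ≤ α (dfun k) := by
      intro k
      have hd1 := hdf1 k
      have hd2 := hdf2 k
      have h1 : C^((dfun k - k).toNat) * α k ≤ α (k + ((dfun k - k).toNat : ℤ)) := hgrow _ k
      have h2 : k + ((dfun k - k).toNat : ℤ) = dfun k := by omega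
      rw [h2] at h1
      have h3 : (dfun k - k).toNat ≤ W := by omega
      have h4 : C^W ≤ C^((dfun k - k).toNat) := pow_le_pow_of_le_one hC.le hC1 h3
      calc C^W * α k ≤ C^((dfun k - k).toNat) * α k :=
            mul_le_mul_of_nonneg_right h4 (hnn k)
        _ ≤ α (dfun k) := h1
    have h1 : C^W * ∑ k ∈ F, α k ≤ ∑ k ∈ F, α (dfun k) := by
      rw [Finset.mul_sum]
      exact Finset.sum_le_sum (fun k _ => hstep k)
    have h2 : ∑ k ∈ F, α (dfun k) ≤ ((W:ℝ)+1) * ∑ d ∈ F.image dfun, α d := by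
      rw [← Finset.sum_fiberwise_of_maps_to (fun k hk => Finset.mem_image_of_mem dfun hk)
        (fun k => α (dfun k))]
      rw [Finset.mul_sum]
      apply Finset.sum_le_sum
      intro d hd
      have hdd : ∀ k ∈ F.filter (fun k => dfun k = d), α (dfun k) = α d := by
        intro k hk
        rw [(Finset.mem_filter.mp hk).2]
      rw [Finset.sum_congr rfl hdd, Finset.sum_const, nsmul_eq_mul]
      apply mul_le_mul_of_nonneg_right ?_ (hnn d)
      have hsub : F.filter (fun k => dfun k = d) ⊆ Finset.Icc (d - W) d := by
        intro k hk
        obtain ⟨hkF, hkd⟩ := Finset.mem_filter.mp hk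
        have h5 := hdf1 k
        have h6 := hdf2 k
        rw [Finset.mem_Icc]
        omega
      have h7 := Finset.card_le_card hsub
      have hI : (Finset.Icc (d - (W:ℤ)) d).card = W + 1 := by
        rw [Int.card_Icc]
        omega
      calc ((F.filter (fun k => dfun k = d)).card : ℝ) ≤ ((W+1 : ℕ) : ℝ) := by
            apply Nat.cast_le.mpr
            rw [← hI]
            exact h7
        _ = (W:ℝ)+1 := by push_cast; ring
    have h3 : ∑ d ∈ F.image dfun, α d ≤ M / c := by
      rw [le_div_iff₀ hc]
      have hterm : ∀ d ∈ F.image dfun, α d * c ≤ sig d * α d := by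
        intro d hd
        obtain ⟨k, _, hk⟩ := Finset.mem_image.mp hd
        have hcd : c ≤ sig d := by rw [← hk]; exact hdf3 k
        calc α d * c = c * α d := mul_comm _ _
          _ ≤ sig d * α d := mul_le_mul_of_nonneg_right hcd (hnn d)
      calc (∑ d ∈ F.image dfun, α d) * c = ∑ d ∈ F.image dfun, α d * c := Finset.sum_mul _ _ _
        _ ≤ ∑ d ∈ F.image dfun, sig d * α d := Finset.sum_le_sum hterm
        _ ≤ M := hFatou _
    rw [le_div_iff₀ hCW]
    calc (∑ k ∈ F, α k) * C^W = C^W * ∑ k ∈ F, α k := mul_comm _ _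
      _ ≤ ∑ k ∈ F, α (dfun k) := h1
      _ ≤ ((W:ℝ)+1) * ∑ d ∈ F.image dfun, α d := h2
      _ ≤ ((W:ℝ)+1) * (M/c) := mul_le_mul_of_nonneg_left h3 (by positivity)
  exact summable_of_sum_le (Pi.le_def.mpr hnn) hBdd


end BayartRuzsaAux

/-- Bayart–Ruzsa: If `(α_n)_{n∈ℤ}` is nonnegative with `α_{n+1} ≥ C α_n` for
all `n`, or `α_n ≥ C α_{n+1}` for all `n` (some `C > 0`), and there is `A ⊆ ℤ` of positive
upper density such that the sums `β_n = ∑_{m∈A} α_{m−n}`, `n ∈ A`, converge and are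
uniformly bounded, then `∑_{n∈ℤ} α_n < ∞`. -/
theorem stmt_5 (α : ℤ → ℝ) (hnn : ∀ n, 0 ≤ α n) (C : ℝ) (hC : 0 < C)
    (hmono : (∀ n : ℤ, C * α n ≤ α (n + 1)) ∨ (∀ n : ℤ, C * α (n + 1) ≤ α n))
    (A : Set ℤ)
    (hA : 0 < Filter.limsup
      (fun N : ℕ => ((A ∩ Set.Icc (-(N : ℤ)) (N : ℤ)).ncard : ℝ) / (2 * N + 1)) Filter.atTop)
    (hconv : ∀ n ∈ A, Summable fun m : A => α ((m : ℤ) - n))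
    (M : ℝ) (hbd : ∀ n ∈ A, (∑' m : A, α ((m : ℤ) - n)) ≤ M) :
    Summable α := by
  classical
  rcases hmono with hm | hm
  · exact br_main α hnn (min C 1) (lt_min hC one_pos) (min_le_right C 1)
      (fun n => le_trans (mul_le_mul_of_nonneg_right (min_le_left C 1) (hnn n)) (hm n))
      A hA hconv M hbd
  · set α' : ℤ → ℝ := fun n => α (-n) with hα'
    set A' : Set ℤ := (fun n : ℤ => -n) ⁻¹' A with hA'def
    have hnn' : ∀ n, 0 ≤ α' n := fun n => hnn _
    have hmono' : ∀ n : ℤ, (min C 1) * α' n ≤ α' (n + 1) := by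
      intro n
      have h1 := hm (-(n+1))
      have h2 : -(n+1)+1 = -n := by ring
      rw [h2] at h1
      show (min C 1) * α (-n) ≤ α (-(n+1))
      calc (min C 1) * α (-n) ≤ C * α (-n) :=
            mul_le_mul_of_nonneg_right (min_le_left C 1) (hnn _)
        _ ≤ α (-(n+1)) := h1
    -- density transfer
    have hAeq : (fun N : ℕ => (((A' ∩ Set.Icc (-(N:ℤ)) (N:ℤ)).ncard : ℝ)) / (2*N+1))
        = (fun N : ℕ => (((A ∩ Set.Icc (-(N:ℤ)) (N:ℤ)).ncard : ℝ)) / (2*N+1)) := by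
      funext N
      have himg : A' ∩ Set.Icc (-(N:ℤ)) (N:ℤ)
          = (fun n : ℤ => -n) '' (A ∩ Set.Icc (-(N:ℤ)) (N:ℤ)) := by
        ext x
        simp only [hA'def, Set.mem_inter_iff, Set.mem_preimage, Set.mem_Icc, Set.mem_image]
        constructor
        · rintro ⟨hxA, hx1, hx2⟩
          exact ⟨-x, ⟨hxA, by omega, by omega⟩, by ring⟩
        · rintro ⟨y, ⟨hyA, hy1, hy2⟩, rfl⟩
          refine ⟨by simpa using hyA, by omega, by omega⟩
      rw [himg, Set.ncard_image_of_injective _ neg_injective]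
    have hA2 : 0 < Filter.limsup
        (fun N : ℕ => ((A' ∩ Set.Icc (-(N : ℤ)) (N : ℤ)).ncard : ℝ) / (2 * N + 1))
        Filter.atTop := by
      rw [hAeq]; exact hA
    -- equivalence of index sets
    have hmemA' : ∀ x : ℤ, x ∈ A' ↔ -x ∈ A := fun x => Iff.rfl
    set eqv : {x // x ∈ A'} ≃ {x // x ∈ A} :=
      { toFun := fun m => ⟨-m.1, m.2⟩
        invFun := fun m => ⟨-m.1, by simp [hA'def]⟩
        left_inv := fun m => by
          apply Subtype.ext
          simp
        right_inv := fun m => by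
          apply Subtype.ext
          simp } with heqv
    have hkey : ∀ n : ℤ, (fun m : {x // x ∈ A'} => α' ((m:ℤ) - n))
        = (fun m : {x // x ∈ A} => α ((m:ℤ) + n)) ∘ eqv := by
      intro n
      funext m
      show α (-((m:ℤ) - n)) = α ((-(m:ℤ)) + n)
      congr 1
      ring
    have hconv' : ∀ n ∈ A', Summable fun m : A' => α' ((m : ℤ) - n) := by
      intro n hn
      have h1 : Summable fun m : {x // x ∈ A} => α ((m:ℤ) + n) := by
        have h0 := hconv (-n) hn
        have h2 : (fun m : {x // x ∈ A} => α ((m:ℤ) - (-n)))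
            = fun m : {x // x ∈ A} => α ((m:ℤ) + n) := by
          funext m; congr 1; ring
        rwa [h2] at h0
      rw [hkey n]
      exact (Equiv.summable_iff eqv).mpr h1
    have hbd' : ∀ n ∈ A', (∑' m : A', α' ((m : ℤ) - n)) ≤ M := by
      intro n hn
      have h2 : (fun m : {x // x ∈ A} => α ((m:ℤ) - (-n)))
          = fun m : {x // x ∈ A} => α ((m:ℤ) + n) := by
        funext m; congr 1; ring
      have h0 := hbd (-n) hn
      rw [h2] at h0
      calc ∑' m : A', α' ((m : ℤ) - n)
          = ∑' m : A', ((fun m : {x // x ∈ A} => α ((m:ℤ) + n)) ∘ eqv) m := by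
            rw [hkey n]
        _ = ∑' m : A, α ((m:ℤ) + n) := eqv.tsum_eq (fun m : {x // x ∈ A} => α ((m:ℤ) + n))
        _ ≤ M := h0
    have hsum' : Summable α' := br_main α' hnn' (min C 1) (lt_min hC one_pos)
      (min_le_right C 1) hmono' A' hA2 hconv' M hbd'
    have hcomp : α' ∘ ⇑(Equiv.neg ℤ) = α := by
      funext n
      show α (-(-n)) = α n
      rw [neg_neg]
    have := (Equiv.summable_iff (Equiv.neg ℤ) (f := α')).mpr hsum'
    rwa [hcomp] at this
end

section
/- Let (X, B, μ, f) be a measurable system, p ≥ 1, W a wandering set with 0 < μ(W) < ∞, and φ ∈ L^p(X) a frequently hypercyclic vector for T_f. Let A = { n ∈ ℕ : ‖T_fⁿφ − χ_W‖_p^p < μ(W)/2^p }. Then A has positive lower density and for each n ∈ A, ∑_{m∈A} ‖ dμ/d(μ∘f^{m−n}) |_W ‖_∞^{-1} < 2. -/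
open MeasureTheory Set Filter
open scoped ENNReal NNReal

namespace Stmt7Aux
set_option linter.unusedSectionVars false

variable {X : Type*}

/-- The `k`-th power (`k : ℤ`) of a bijection `f`. -/
noncomputable def epow [Nonempty X] (f : X → X) (k : ℤ) : X → X :=
  if 0 ≤ k then f^[k.toNat] else (Function.invFun f)^[(-k).toNat]

variable [Nonempty X] {f : X → X}

lemma epow_cancel (hbij : Function.Bijective f) (k : ℤ) (x : X) :
    epow f k (epow f (-k) x) = x := by
  have hg := Function.leftInverse_invFun (f := f) hbij.1
  have hf := Function.rightInverse_invFun (f := f) hbij.2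
  rcases lt_trichotomy k 0 with h | rfl | h
  · have h1 : ¬ (0:ℤ) ≤ k := not_le.2 h
    have h2 : (0:ℤ) ≤ -k := by omega
    simp only [epow, if_pos h2, if_neg h1]
    exact (hg.iterate _) x
  · simp [epow]
  · have h1 : (0:ℤ) ≤ k := h.le
    have h2 : ¬ (0:ℤ) ≤ -k := by omega
    simp only [epow, if_pos h1, if_neg h2, neg_neg]
    exact (hf.iterate _) x

lemma invFun_measurable [MeasurableSpace X] (hbij : Function.Bijective f)
    (himg : ∀ B : Set X, MeasurableSet B → MeasurableSet (f '' B)) :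
    Measurable (Function.invFun f) := by
  intro B hB
  have : Function.invFun f ⁻¹' B = f '' B := by
    ext x
    constructor
    · intro hx; exact ⟨_, hx, Function.rightInverse_invFun hbij.2 x⟩
    · rintro ⟨b, hb, rfl⟩
      rwa [mem_preimage, Function.leftInverse_invFun hbij.1]
  rw [this]; exact himg B hB

lemma epow_measurable [MeasurableSpace X] (hbij : Function.Bijective f)
    (hmeas : Measurable f)
    (himg : ∀ B : Set X, MeasurableSet B → MeasurableSet (f '' B)) (k : ℤ) :
    Measurable (epow f k) := by
  unfold epow; split
  · exact hmeas.iterate _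
  · exact (invFun_measurable hbij himg).iterate _

/-- The `k`-th power of a bimeasurable bijection as a measurable equivalence. -/
noncomputable def epowEquiv [MeasurableSpace X] (hbij : Function.Bijective f)
    (hmeas : Measurable f)
    (himg : ∀ B : Set X, MeasurableSet B → MeasurableSet (f '' B)) (k : ℤ) : X ≃ᵐ X where
  toFun := epow f k
  invFun := epow f (-k)
  left_inv := fun x => by
    have h := epow_cancel hbij (-k) x
    rwa [neg_neg] at h
  right_inv := fun x => epow_cancel hbij k x
  measurable_toFun := epow_measurable hbij hmeas himg k
  measurable_invFun := epow_measurable hbij hmeas himg (-k)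

@[simp] lemma epowEquiv_coe [MeasurableSpace X] (hbij : Function.Bijective f)
    (hmeas : Measurable f)
    (himg : ∀ B : Set X, MeasurableSet B → MeasurableSet (f '' B)) (k : ℤ) :
    ⇑(epowEquiv hbij hmeas himg k) = epow f k := rfl

lemma zimg_eq_preimage (hbij : Function.Bijective f) (k : ℤ) (B : Set X) :
    zimg f k B = epow f (-k) ⁻¹' B := by
  rcases lt_trichotomy k 0 with h | rfl | h
  · simp only [zimg, if_neg (not_le.2 h), epow, if_pos (by omega : (0:ℤ) ≤ -k)]
  · simp [zimg, epow]
  · simp only [zimg, if_pos h.le, epow, if_neg (by omega : ¬ (0:ℤ) ≤ -k), neg_neg]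
    ext x
    constructor
    · rintro ⟨b, hb, rfl⟩
      rw [mem_preimage, (Function.leftInverse_invFun (f := f) hbij.1).iterate _ b]
      exact hb
    · intro hx
      exact ⟨_, hx, (Function.rightInverse_invFun (f := f) hbij.2).iterate _ x⟩

lemma iterate_epow (hbij : Function.Bijective f) (m n : ℕ) (x : X) :
    f^[m] (epow f ((n:ℤ) - m) x) = f^[n] x := by
  rcases le_or_gt m n with h | h
  · have h0 : (0:ℤ) ≤ (n:ℤ) - m := by omega
    simp only [epow, if_pos h0]
    have ht : ((n:ℤ) - m).toNat = n - m := by omega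
    rw [ht, ← Function.iterate_add_apply]
    have hmn : m + (n - m) = n := by omega
    rw [hmn]
  · have h0 : ¬ (0:ℤ) ≤ (n:ℤ) - m := by omega
    simp only [epow, if_neg h0]
    have ht : (-((n:ℤ) - m)).toNat = m - n := by omega
    rw [ht]
    have hcomp : f^[m] = f^[n] ∘ f^[m - n] := by
      rw [← Function.iterate_add]
      have : n + (m - n) = m := by omega
      rw [this]
    rw [hcomp, Function.comp_apply]
    congr 1
    exact (Function.rightInverse_invFun (f := f) hbij.2).iterate _ x

lemma iterimg_measurable [MeasurableSpace X]
    (himg : ∀ B : Set X, MeasurableSet B → MeasurableSet (f '' B)) (j : ℕ)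
    {B : Set X} (hB : MeasurableSet B) : MeasurableSet (f^[j] '' B) := by
  induction j with
  | zero => simpa using hB
  | succ j ih =>
    rw [Function.iterate_succ', Set.image_comp]
    exact himg _ ih

lemma zimg_measurable [MeasurableSpace X] (hmeas : Measurable f)
    (himg : ∀ B : Set X, MeasurableSet B → MeasurableSet (f '' B)) (k : ℤ)
    {B : Set X} (hB : MeasurableSet B) : MeasurableSet (zimg f k B) := by
  unfold zimg; split
  · exact iterimg_measurable himg _ hB
  · exact (hmeas.iterate _) hB

section NullIff

variable [MeasurableSpace X] {μ : Measure X}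

lemma img_null_iff (hbij : Function.Bijective f)
    (himg : ∀ B : Set X, MeasurableSet B → MeasurableSet (f '' B))
    (hns : ∀ B : Set X, MeasurableSet B → (μ (f ⁻¹' B) = 0 ↔ μ B = 0))
    {B : Set X} (hB : MeasurableSet B) : μ (f '' B) = 0 ↔ μ B = 0 := by
  have h := hns (f '' B) (himg B hB)
  rw [hbij.injective.preimage_image] at h
  exact h.symm

lemma iterimg_null_iff (hbij : Function.Bijective f)
    (himg : ∀ B : Set X, MeasurableSet B → MeasurableSet (f '' B))
    (hns : ∀ B : Set X, MeasurableSet B → (μ (f ⁻¹' B) = 0 ↔ μ B = 0)) (j : ℕ)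
    {B : Set X} (hB : MeasurableSet B) : μ (f^[j] '' B) = 0 ↔ μ B = 0 := by
  induction j with
  | zero => simp
  | succ j ih =>
    rw [Function.iterate_succ', Set.image_comp,
      img_null_iff hbij himg hns (iterimg_measurable himg j hB)]
    exact ih

lemma iterpre_null_iff (hmeas : Measurable f)
    (hns : ∀ B : Set X, MeasurableSet B → (μ (f ⁻¹' B) = 0 ↔ μ B = 0)) (j : ℕ)
    {B : Set X} (hB : MeasurableSet B) : μ (f^[j] ⁻¹' B) = 0 ↔ μ B = 0 := by
  induction j generalizing B with
  | zero => simp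
  | succ j ih =>
    rw [Function.iterate_succ', Set.preimage_comp]
    rw [ih (hmeas hB)]
    exact hns B hB

lemma zimg_null_iff (hbij : Function.Bijective f) (hmeas : Measurable f)
    (himg : ∀ B : Set X, MeasurableSet B → MeasurableSet (f '' B))
    (hns : ∀ B : Set X, MeasurableSet B → (μ (f ⁻¹' B) = 0 ↔ μ B = 0)) (k : ℤ)
    {B : Set X} (hB : MeasurableSet B) : μ (zimg f k B) = 0 ↔ μ B = 0 := by
  unfold zimg; split
  · exact iterimg_null_iff hbij himg hns _ hB
  · exact iterpre_null_iff hmeas hns _ hB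

end NullIff


end Stmt7Aux

open Stmt7Aux

/-- If `φ` is a frequently hypercyclic vector for the composition operator
`T_f` and `W` is a wandering set of finite positive measure, then
`A = {n : ‖T_fⁿφ − χ_W‖_p^p < μ(W)/2^p}` has positive lower density and for each `n ∈ A`,
`∑_{m∈A} ‖dμ/d(μ∘f^{m−n})|_W‖_∞⁻¹ < 2`. -/
theorem stmt_7 {X : Type*} [MeasurableSpace X] (μ : Measure X) (f : X → X) (c : ℝ≥0∞)
    (hsys : MeasSystem μ f c) (p : ℝ≥0∞) [Fact (1 ≤ p)] (hp : p ≠ ⊤)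
    (T : Lp ℝ p μ →L[ℝ] Lp ℝ p μ)
    (hT : ∀ ψ : Lp ℝ p μ, (T ψ : X → ℝ) =ᵐ[μ] fun x => (ψ : X → ℝ) (f x))
    (ν : ℤ → Measure X) (hν : ∀ (n : ℤ) (B : Set X), MeasurableSet B → ν n B = μ (zimg f n B))
    (W : Set X) (hWm : MeasurableSet W) (hWw : Wandering f W)
    (hW0 : 0 < μ W) (hWfin : μ W ≠ ⊤)
    (φ : Lp ℝ p μ)
    (hφ : ∀ U : Set (Lp ℝ p μ), IsOpen U → U.Nonempty → PosLowerDensity {n : ℕ | (T ^ n) φ ∈ U})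
    (A : Set ℕ)
    (hA : A = {n : ℕ | ‖(T ^ n) φ - indicatorConstLp p hWm hWfin (1 : ℝ)‖ ^ p.toReal
      < (μ W).toReal / 2 ^ p.toReal}) :
    PosLowerDensity A ∧
      ∀ n ∈ A, (∑' m : A, dSeq μ (ν ((m : ℤ) - (n : ℤ))) W) < 2 := by
  obtain ⟨hσ, hμX, hbij, hmeas, himg, hns, hc0, hcT, hcb⟩ := hsys
  haveI := hσ
  haveI : Nonempty X := by
    rcases isEmpty_or_nonempty X with h | h
    · rw [Set.univ_eq_empty_iff.2 h] at hμX
      simp at hμX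
    · exact h
  have hp1 : (1:ℝ≥0∞) ≤ p := Fact.out
  have hp0 : p ≠ 0 := by
    intro h
    rw [h] at hp1
    simp at hp1
  set r : ℝ := p.toReal with hrdef
  have hr1 : (1:ℝ) ≤ r := by
    have := ENNReal.toReal_mono hp hp1
    simpa using this
  have hr0 : (0:ℝ) < r := lt_of_lt_of_le one_pos hr1
  set χL : Lp ℝ p μ := indicatorConstLp p hWm hWfin (1 : ℝ) with hχLdef
  have hμW : 0 < (μ W).toReal := ENNReal.toReal_pos hW0.ne' hWfin
  -- Part 1
  have hPLD : PosLowerDensity A := by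
    have hU : IsOpen {ψ : Lp ℝ p μ | ‖ψ - χL‖ ^ r < (μ W).toReal / 2 ^ r} := by
      have hcont : Continuous fun ψ : Lp ℝ p μ => ‖ψ - χL‖ ^ r :=
        ((continuous_id.sub continuous_const).norm).rpow_const (fun ψ => Or.inr hr0.le)
      exact isOpen_Iio.preimage hcont
    have hUne : Set.Nonempty {ψ : Lp ℝ p μ | ‖ψ - χL‖ ^ r < (μ W).toReal / 2 ^ r} := by
      refine ⟨χL, ?_⟩
      simp only [Set.mem_setOf_eq, sub_self, norm_zero]
      rw [Real.zero_rpow hr0.ne']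
      exact div_pos hμW (Real.rpow_pos_of_pos two_pos r)
    have h := hφ _ hU hUne
    rw [hA]
    exact h
  refine ⟨hPLD, fun n hn => ?_⟩
  -- setup
  classical
  set Φ : ℕ → X → ℝ := fun m => (((T ^ m) φ : Lp ℝ p μ) : X → ℝ) with hΦdef
  set χ : X → ℝ := W.indicator (fun _ => (1:ℝ)) with hχdef
  have hΦsm : ∀ m, StronglyMeasurable (Φ m) := fun m => Lp.stronglyMeasurable _
  have hφsm : StronglyMeasurable ((φ : X → ℝ)) := Lp.stronglyMeasurable _
  set cE : ℝ≥0∞ := μ W / (2:ℝ≥0∞) ^ r with hcEdef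
  have h2top : ((2:ℝ≥0∞) ^ r) ≠ ⊤ :=
    ENNReal.rpow_ne_top_of_nonneg hr0.le (by norm_num)
  have h2zero : ((2:ℝ≥0∞) ^ r) ≠ 0 := by
    intro h
    have : (0:ℝ≥0∞) < (2:ℝ≥0∞) ^ r := ENNReal.rpow_pos (by norm_num) (by norm_num)
    rw [h] at this
    exact lt_irrefl _ this
  have hcE0 : cE ≠ 0 := by
    rw [hcEdef]
    simp only [ne_eq, ENNReal.div_eq_zero_iff, not_or]
    exact ⟨hW0.ne', h2top⟩
  have hcEtop : cE ≠ ⊤ := by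
    rw [hcEdef]
    exact (ENNReal.div_lt_top hWfin h2zero).ne
  -- membership: lintegral bound
  have hL : ∀ m : ℕ, m ∈ A → (∫⁻ x, (‖Φ m x - χ x‖₊ : ℝ≥0∞) ^ r ∂μ) < cE := by
    intro m hm
    rw [hA] at hm
    simp only [Set.mem_setOf_eq] at hm
    have hae : (((T ^ m) φ - χL : Lp ℝ p μ) : X → ℝ) =ᵐ[μ] fun x => Φ m x - χ x := by
      filter_upwards [Lp.coeFn_sub ((T ^ m) φ) χL,
        indicatorConstLp_coeFn (p := p) (hs := hWm) (hμs := hWfin) (c := (1:ℝ))] with x h1 h2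
      rw [h1, Pi.sub_apply, hΦdef, hχdef]
      simp only []
      rw [h2]
    set a : ℝ≥0∞ := eLpNorm (fun x => Φ m x - χ x) p μ with hadef
    have hnorm : ‖(T ^ m) φ - χL‖ = a.toReal := by
      rw [Lp.norm_def, eLpNorm_congr_ae hae]
    have hafin : a ≠ ⊤ := by
      rw [hadef, ← eLpNorm_congr_ae hae]
      exact Lp.eLpNorm_ne_top _
    have heq : a = (∫⁻ x, (‖Φ m x - χ x‖₊ : ℝ≥0∞) ^ r ∂μ) ^ (1/r) :=
      eLpNorm_eq_lintegral_rpow_enorm_toReal hp0 hp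
    have hIeq : (∫⁻ x, (‖Φ m x - χ x‖₊ : ℝ≥0∞) ^ r ∂μ) = a ^ r := by
      rw [heq, ← ENNReal.rpow_mul, one_div, inv_mul_cancel₀ hr0.ne', ENNReal.rpow_one]
    rw [hIeq]
    have hartop : a ^ r ≠ ⊤ := ENNReal.rpow_ne_top_of_nonneg hr0.le hafin
    rw [← ENNReal.toReal_lt_toReal hartop hcEtop]
    rw [← ENNReal.toReal_rpow]
    rw [hcEdef, ENNReal.toReal_div, ← ENNReal.toReal_rpow]
    rw [hnorm] at hm
    simpa using hm
  -- Step A : lower bound on the integral of ‖Φ m‖ over W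
  have hIlow : ∀ m : ℕ, m ∈ A → cE ≤ ∫⁻ x in W, (‖Φ m x‖₊ : ℝ≥0∞) ^ r ∂μ := by
    intro m hm
    have hLm := hL m hm
    have hres0 : μ.restrict W ≠ 0 := by
      rw [ne_eq, Measure.restrict_eq_zero]
      exact hW0.ne'
    have h1 : eLpNorm (fun _ : X => (1:ℝ)) p (μ.restrict W) = (μ W) ^ (1/r) := by
      rw [eLpNorm_const (1:ℝ) hp0 hres0]
      simp [Measure.restrict_apply_univ]
      rfl
    have htri : (μ W) ^ (1/r) ≤
        eLpNorm (fun x => (1:ℝ) - Φ m x) p (μ.restrict W)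
          + eLpNorm (Φ m) p (μ.restrict W) := by
      rw [← h1]
      have hfun : (fun _ : X => (1:ℝ)) = (fun x => ((1:ℝ) - Φ m x)) + Φ m := by
        funext x
        simp
      rw [hfun]
      exact eLpNorm_add_le
        ((stronglyMeasurable_const.sub (hΦsm m)).aestronglyMeasurable)
        (hΦsm m).aestronglyMeasurable hp1
    have h2 : eLpNorm (fun x => (1:ℝ) - Φ m x) p (μ.restrict W) ≤ (μ W) ^ (1/r) / 2 := by
      have e1 : eLpNorm (fun x => (1:ℝ) - Φ m x) p (μ.restrict W)
          = eLpNorm (fun x => Φ m x - χ x) p (μ.restrict W) := by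
        apply eLpNorm_congr_norm_ae
        filter_upwards [ae_restrict_mem hWm] with x hx
        rw [hχdef]
        simp only [Set.indicator_of_mem hx]
        rw [norm_sub_rev]
      have e2 : eLpNorm (fun x => Φ m x - χ x) p (μ.restrict W)
          ≤ eLpNorm (fun x => Φ m x - χ x) p μ :=
        eLpNorm_mono_measure _ Measure.restrict_le_self
      have e3 : eLpNorm (fun x => Φ m x - χ x) p μ
          = (∫⁻ x, (‖Φ m x - χ x‖₊ : ℝ≥0∞) ^ r ∂μ) ^ (1/r) :=
        eLpNorm_eq_lintegral_rpow_enorm_toReal hp0 hp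
      have e4 : (∫⁻ x, (‖Φ m x - χ x‖₊ : ℝ≥0∞) ^ r ∂μ) ^ (1/r) ≤ cE ^ (1/r) :=
        ENNReal.rpow_le_rpow hLm.le (by positivity)
      have e5 : cE ^ (1/r) = (μ W) ^ (1/r) / 2 := by
        rw [hcEdef, ENNReal.div_rpow_of_nonneg _ _ (by positivity), ← ENNReal.rpow_mul,
          mul_one_div, div_self hr0.ne', ENNReal.rpow_one]
      rw [e1]
      exact e2.trans (e3 ▸ (e4.trans e5.le))
    have hhalf_fin : (μ W) ^ (1/r) / 2 ≠ ⊤ := by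
      apply ne_top_of_le_ne_top (b := (μ W) ^ (1/r))
      · exact ENNReal.rpow_ne_top_of_nonneg (by positivity) hWfin
      · exact ENNReal.half_le_self
    have h3 : (μ W) ^ (1/r) / 2 ≤ eLpNorm (Φ m) p (μ.restrict W) := by
      have h4 : (μ W) ^ (1/r) ≤ (μ W) ^ (1/r) / 2 + eLpNorm (Φ m) p (μ.restrict W) :=
        htri.trans (add_le_add_left h2 _)
      nth_rewrite 1 [← ENNReal.add_halves ((μ W) ^ (1/r))] at h4
      exact (ENNReal.add_le_add_iff_left hhalf_fin).mp h4
    have h5 : ((μ W) ^ (1/r) / 2) ^ r ≤ (eLpNorm (Φ m) p (μ.restrict W)) ^ r :=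
      ENNReal.rpow_le_rpow h3 hr0.le
    have h6 : ((μ W) ^ (1/r) / 2) ^ r = cE := by
      rw [ENNReal.div_rpow_of_nonneg _ _ hr0.le, ← ENNReal.rpow_mul, one_div,
        inv_mul_cancel₀ hr0.ne', ENNReal.rpow_one, hcEdef]
    have h7 : (eLpNorm (Φ m) p (μ.restrict W)) ^ r = ∫⁻ x in W, (‖Φ m x‖₊ : ℝ≥0∞) ^ r ∂μ := by
      rw [eLpNorm_eq_lintegral_rpow_enorm_toReal hp0 hp, ← ENNReal.rpow_mul, one_div,
        inv_mul_cancel₀ hr0.ne', ENNReal.rpow_one]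
      rfl
    rw [← h6, ← h7]
    exact h5
  -- general facts about ν
  have hν_eq : ∀ k : ℤ, ν k = μ.map (epow f (-k)) := by
    intro k
    refine Measure.ext fun B hB => ?_
    rw [Measure.map_apply (epow_measurable hbij hmeas himg _) hB, hν k B hB,
      zimg_eq_preimage hbij]
  have hν_ac1 : ∀ k : ℤ, μ ≪ ν k := by
    intro k
    refine Measure.AbsolutelyContinuous.mk fun B hB h0 => ?_
    rw [hν k B hB] at h0
    exact (zimg_null_iff hbij hmeas himg hns k hB).1 h0
  have hν_ac2 : ∀ k : ℤ, ν k ≪ μ := by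
    intro k
    refine Measure.AbsolutelyContinuous.mk fun B hB h0 => ?_
    rw [hν k B hB]
    exact (zimg_null_iff hbij hmeas himg hns k hB).2 h0
  have hν_sf : ∀ k : ℤ, SigmaFinite (ν k) := by
    intro k
    rw [hν_eq k]
    exact (epowEquiv hbij hmeas himg (-k)).sigmaFinite_map
  -- Step B : rnDeriv bound
  have hStepB : ∀ (k : ℤ) (h : X → ℝ≥0∞), Measurable h →
      dSeq μ (ν k) W * ∫⁻ x in W, h x ∂μ ≤ ∫⁻ x in W, h x ∂(ν k) := by
    intro k h hh
    haveI := hν_sf k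
    set g : X → ℝ≥0∞ := μ.rnDeriv (ν k) with hgdef
    set E : ℝ≥0∞ := essSup g (μ.restrict W) with hEdef
    have hwd : (ν k).withDensity g = μ := Measure.withDensity_rnDeriv_eq μ (ν k) (hν_ac1 k)
    have h1 : ∫⁻ x in W, h x ∂μ = ∫⁻ x in W, g x * h x ∂(ν k) := by
      conv_lhs => rw [← hwd]
      rw [restrict_withDensity hWm,
        lintegral_withDensity_eq_lintegral_mul _ (Measure.measurable_rnDeriv _ _) hh]
      rfl
    have h2 : ∀ᵐ x ∂((ν k).restrict W), g x ≤ E :=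
      (ae_le_essSup (f := g) (μ := μ.restrict W)).filter_mono (((hν_ac2 k).restrict W).ae_le)
    have h3 : ∫⁻ x in W, g x * h x ∂(ν k) ≤ E * ∫⁻ x in W, h x ∂(ν k) := by
      rw [← lintegral_const_mul E hh]
      exact lintegral_mono_ae (h2.mono fun x hx => mul_le_mul_left hx _)
    have hds : dSeq μ (ν k) W = E⁻¹ := rfl
    calc dSeq μ (ν k) W * ∫⁻ x in W, h x ∂μ
        = E⁻¹ * ∫⁻ x in W, h x ∂μ := by rw [hds]
      _ ≤ E⁻¹ * (E * ∫⁻ x in W, h x ∂(ν k)) := by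
          rw [h1]
          exact mul_le_mul_right h3 _
      _ = (E⁻¹ * E) * ∫⁻ x in W, h x ∂(ν k) := (mul_assoc _ _ _).symm
      _ ≤ 1 * ∫⁻ x in W, h x ∂(ν k) := mul_le_mul_left (ENNReal.inv_mul_le_one E) _
      _ = ∫⁻ x in W, h x ∂(ν k) := one_mul _
  -- nonsingularity for arbitrary null sets
  have hnull : ∀ N : Set X, μ N = 0 → μ (f ⁻¹' N) = 0 := by
    intro N hN
    have h1 : μ (toMeasurable μ N) = 0 := by
      rw [measure_toMeasurable]
      exact hN
    have h2 := (hns _ (measurableSet_toMeasurable μ N)).2 h1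
    exact measure_mono_null (Set.preimage_mono (subset_toMeasurable μ N)) h2
  have hcomp : ∀ {g₁ g₂ : X → ℝ}, g₁ =ᵐ[μ] g₂ →
      (fun x => g₁ (f x)) =ᵐ[μ] (fun x => g₂ (f x)) := by
    intro g₁ g₂ h
    have h' : μ {x | g₁ x ≠ g₂ x} = 0 := by
      rw [Filter.EventuallyEq, ae_iff] at h
      exact h
    rw [Filter.EventuallyEq, ae_iff]
    have hset : {x | ¬ g₁ (f x) = g₂ (f x)} = f ⁻¹' {x | g₁ x ≠ g₂ x} := rfl
    rw [hset]
    exact hnull _ h'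
  -- iterates a.e.
  have hΦae : ∀ m : ℕ, Φ m =ᵐ[μ] fun x => (φ : X → ℝ) (f^[m] x) := by
    intro m
    induction m with
    | zero =>
      rw [hΦdef]
      simp only [pow_zero, Function.iterate_zero]
      have : ((1 : Lp ℝ p μ →L[ℝ] Lp ℝ p μ)) φ = φ := rfl
      rw [this]
      exact Filter.EventuallyEq.rfl
    | succ m ih =>
      have h1 : (T ^ (m+1)) φ = T ((T ^ m) φ) := by
        rw [pow_succ']
        rfl
      have hφm := hT ((T ^ m) φ)
      calc Φ (m+1) =ᵐ[μ] fun x => Φ m (f x) := by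
            rw [hΦdef]
            simp only [h1]
            exact hφm
        _ =ᵐ[μ] fun x => (φ : X → ℝ) (f^[m] (f x)) := hcomp ih
        _ = fun x => (φ : X → ℝ) (f^[m+1] x) := by
            funext x
            rw [Function.iterate_succ_apply]
  -- dSeq at 0 is 1
  have hν0 : ν 0 = μ := by
    refine Measure.ext fun B hB => ?_
    rw [hν 0 B hB]
    simp [zimg]
  have hd0 : dSeq μ (ν 0) W = 1 := by
    rw [dSeq, hν0]
    have h1 : μ.rnDeriv μ =ᵐ[μ.restrict W] fun _ => (1:ℝ≥0∞) :=
      (Measure.rnDeriv_self μ).filter_mono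
        (Measure.absolutelyContinuous_of_le Measure.restrict_le_self).ae_le
    rw [essSup_congr_ae h1, essSup_const]
    · exact inv_one
    · rw [ne_eq, Measure.restrict_eq_zero]
      exact hW0.ne'
  -- the density measure
  set ρ : Measure X := μ.withDensity (fun x => (‖Φ n x - χ x‖₊ : ℝ≥0∞) ^ r) with hρdef
  have hρuniv : ρ Set.univ = ∫⁻ x, (‖Φ n x - χ x‖₊ : ℝ≥0∞) ^ r ∂μ := by
    rw [hρdef, withDensity_apply _ MeasurableSet.univ, Measure.restrict_univ]
  have hρlt : ρ Set.univ < cE := by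
    rw [hρuniv]
    exact hL n hn
  -- key estimate
  have hkey : ∀ m : ℕ, m ∈ A → m ≠ n →
      dSeq μ (ν ((m:ℤ) - n)) W * cE ≤ ρ (zimg f ((m:ℤ) - n) W) := by
    intro m hm hmn
    set k : ℤ := (m:ℤ) - n with hkdef
    have hS : MeasurableSet (zimg f k W) := zimg_measurable hmeas himg k hWm
    have hmeasΦm : Measurable fun x => (‖Φ m x‖₊ : ℝ≥0∞) ^ r :=
      ENNReal.continuous_rpow_const.measurable.comp
        ((hΦsm m).measurable.nnnorm.coe_nnreal_ennreal)
    have hmeasH : Measurable fun x => (‖(φ : X → ℝ) (f^[m] x)‖₊ : ℝ≥0∞) ^ r :=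
      ENNReal.continuous_rpow_const.measurable.comp
        (((hφsm.measurable.comp (hmeas.iterate m))).nnnorm.coe_nnreal_ennreal)
    have hdisj : Disjoint (zimg f k W) W := by
      have hk0 : k ≠ 0 := by
        rw [hkdef]
        intro h
        apply hmn
        omega
      have hd : Disjoint (zimg f k W) (zimg f 0 W) := hWw hk0
      have hz0 : zimg f 0 W = W := by simp [zimg]
      rwa [hz0] at hd
    calc dSeq μ (ν k) W * cE
        ≤ dSeq μ (ν k) W * ∫⁻ x in W, (‖Φ m x‖₊ : ℝ≥0∞) ^ r ∂μ :=
          mul_le_mul_right (hIlow m hm) _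
      _ ≤ ∫⁻ x in W, (‖Φ m x‖₊ : ℝ≥0∞) ^ r ∂(ν k) := hStepB k _ hmeasΦm
      _ = ∫⁻ x in W, (‖(φ : X → ℝ) (f^[m] x)‖₊ : ℝ≥0∞) ^ r ∂(ν k) := by
          apply lintegral_congr_ae
          have h1 : Φ m =ᵐ[(ν k).restrict W] fun x => (φ : X → ℝ) (f^[m] x) :=
            (hΦae m).filter_mono (((hν_ac2 k).restrict W).trans
              (Measure.absolutelyContinuous_of_le Measure.restrict_le_self)).ae_le
          exact h1.mono fun x hx => by dsimp only; rw [hx]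
      _ = ∫⁻ x in zimg f k W, (‖(φ : X → ℝ) (f^[n] x)‖₊ : ℝ≥0∞) ^ r ∂μ := by
          rw [hν_eq k, setLIntegral_map hWm hmeasH (epow_measurable hbij hmeas himg (-k))]
          rw [← zimg_eq_preimage hbij]
          apply lintegral_congr_ae
          apply Filter.Eventually.of_forall
          intro x
          have hnk : -k = (n:ℤ) - m := by omega
          dsimp only
          rw [hnk, iterate_epow hbij m n x]
      _ = ∫⁻ x in zimg f k W, (‖Φ n x - χ x‖₊ : ℝ≥0∞) ^ r ∂μ := by
          apply lintegral_congr_ae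
          have h0 : ∀ᵐ x ∂μ.restrict (zimg f k W), x ∈ zimg f k W := ae_restrict_mem hS
          have h1 : (fun x => (φ : X → ℝ) (f^[n] x)) =ᵐ[μ.restrict (zimg f k W)] Φ n :=
            ((hΦae n).symm).filter_mono
              (Measure.absolutelyContinuous_of_le Measure.restrict_le_self).ae_le
          filter_upwards [h0, h1] with x hx h1x
          have hχ0 : χ x = 0 := by
            rw [hχdef]
            exact Set.indicator_of_notMem (Set.disjoint_left.mp hdisj hx) _
          rw [hχ0, sub_zero, h1x]
      _ = ρ (zimg f k W) := (withDensity_apply _ hS).symm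
  -- finite sums
  set a₀ : ↥A := ⟨n, hn⟩ with ha₀def
  set D : ↥A → ℝ≥0∞ := fun m => dSeq μ (ν ((m:ℤ) - n)) W with hDdef
  have hfinset : ∀ G : Finset ↥A, a₀ ∉ G → (∑ m ∈ G, D m) * cE ≤ ρ Set.univ := by
    intro G hG
    rw [Finset.sum_mul]
    have hle : ∀ m ∈ G, D m * cE ≤ ρ (zimg f (((m:ℕ):ℤ) - n) W) := by
      intro m hmG
      have hmn : (m:ℕ) ≠ n := by
        intro h
        apply hG
        have : m = a₀ := Subtype.ext h
        rwa [this] at hmG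
      exact hkey (m:ℕ) m.2 hmn
    have hdisj : (↑G : Set ↥A).PairwiseDisjoint fun m : ↥A => zimg f (((m:ℕ):ℤ) - n) W := by
      intro x _ y _ hxy
      have hne : ((x:ℕ):ℤ) - n ≠ ((y:ℕ):ℤ) - n := by
        intro h
        apply hxy
        apply Subtype.ext
        omega
      exact hWw hne
    have hmeas' : ∀ m ∈ G, MeasurableSet (zimg f (((m:ℕ):ℤ) - n) W) := fun m _ =>
      zimg_measurable hmeas himg _ hWm
    calc ∑ m ∈ G, D m * cE ≤ ∑ m ∈ G, ρ (zimg f (((m:ℕ):ℤ) - n) W) :=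
          Finset.sum_le_sum hle
      _ = ρ (⋃ m ∈ G, zimg f (((m:ℕ):ℤ) - n) W) :=
          (measure_biUnion_finset hdisj hmeas').symm
      _ ≤ ρ Set.univ := measure_mono (Set.subset_univ _)
  -- the remainder sum
  set R : ℝ≥0∞ := ∑' m : ↥A, (if m = a₀ then 0 else D m) with hRdef
  have hRle : R * cE ≤ ρ Set.univ := by
    rw [hRdef, ENNReal.tsum_eq_iSup_sum, ENNReal.iSup_mul]
    apply iSup_le
    intro G
    have hsum : (∑ m ∈ G, if m = a₀ then 0 else D m) = ∑ m ∈ G.erase a₀, D m := by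
      rw [← Finset.sum_erase G (by simp : (if a₀ = a₀ then 0 else D a₀) = 0)]
      apply Finset.sum_congr rfl
      intro m hmG
      rw [if_neg (Finset.ne_of_mem_erase hmG)]
    rw [hsum]
    exact hfinset (G.erase a₀) (Finset.notMem_erase _ _)
  have hR1 : R < 1 := by
    by_contra hcon
    push_neg at hcon
    have hge : cE ≤ R * cE := by
      calc cE = 1 * cE := (one_mul _).symm
        _ ≤ R * cE := mul_le_mul_left hcon _
    exact lt_irrefl cE (lt_of_le_of_lt (hge.trans hRle) hρlt)
  -- assemble
  have hsplit : (∑' m : ↥A, dSeq μ (ν ((m:ℤ) - n)) W) = D a₀ + R := by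
    rw [hRdef, ENNReal.tsum_eq_add_tsum_ite a₀]
    congr 1
    apply tsum_congr
    intro m
    by_cases hm : m = a₀ <;> simp [hm, hDdef]
  have hDa₀ : D a₀ = 1 := by
    rw [hDdef]
    have h0 : ((a₀:ℕ):ℤ) - (n:ℤ) = 0 := by
      rw [ha₀def]
      simp
    dsimp only
    rw [h0, hd0]
  rw [hsplit, hDa₀]
  have h2 : (2:ℝ≥0∞) = 1 + 1 := one_add_one_eq_two.symm
  rw [h2]
  exact ENNReal.add_lt_add_left ENNReal.one_ne_top hR1
end

section
/- Let X = ℤ × ℤ, f(i,j) = (i, j+1), and μ the measure on the power set of X with μ({(i,j)}) = 2^{−|j|}. Then μ(X) = ∞, f is dissipative (with wandering set ℤ × {0} generating X), and f satisfies the Summability Condition (SC): for each ε > 0 and each B ⊆ X with μ(B) < ∞, there exists B' ⊆ B with μ(B∖B') < ε and ∑_{n∈ℤ} μ(fⁿ(B')) < ∞. -/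
open MeasureTheory Set Filter
open scoped ENNReal NNReal

section Aux

private lemma F_iter (k : ℕ) (p : ℤ × ℤ) :
    (fun p : ℤ × ℤ => (p.1, p.2 + 1))^[k] p = (p.1, p.2 + k) := by
  induction k generalizing p with
  | zero => simp
  | succ n ih =>
    rw [Function.iterate_succ_apply, ih]
    simp [Prod.ext_iff]
    ring

private lemma zimg_eq_s11 (n : ℤ) (B : Set (ℤ × ℤ)) :
    zimg (fun p : ℤ × ℤ => (p.1, p.2 + 1)) n B
      = (fun p : ℤ × ℤ => (p.1, p.2 + n)) '' B := by
  unfold zimg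
  split_ifs with h
  · have he : (fun p : ℤ × ℤ => (p.1, p.2 + 1))^[n.toNat]
        = fun p : ℤ × ℤ => (p.1, p.2 + n) := by
      funext p
      rw [F_iter, Int.toNat_of_nonneg h]
    rw [he]
  · push_neg at h
    have hc : ((-n).toNat : ℤ) = -n := Int.toNat_of_nonneg (by omega)
    ext p
    simp only [Set.mem_preimage, F_iter, hc, Set.mem_image]
    constructor
    · intro hp
      exact ⟨(p.1, p.2 + -n), hp, by simp [Prod.ext_iff]⟩
    · rintro ⟨q, hq, rfl⟩
      simpa using hq

private lemma zimg_W (n : ℤ) :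
    zimg (fun p : ℤ × ℤ => (p.1, p.2 + 1)) n (Set.univ ×ˢ {0})
      = {p : ℤ × ℤ | p.2 = n} := by
  rw [zimg_eq_s11]
  ext p
  simp only [Set.mem_image, Set.mem_prod, Set.mem_univ, Set.mem_singleton_iff, true_and,
    Set.mem_setOf_eq]
  constructor
  · rintro ⟨q, hq, rfl⟩
    simp [hq]
  · intro hp
    exact ⟨(p.1, 0), rfl, by simp [Prod.ext_iff, hp.symm]⟩

private lemma geo_ne_top : ∑' k : ℕ, (2 : ℝ≥0∞) ^ (-(k : ℤ)) ≠ ⊤ := by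
  have h : ∀ k : ℕ, (2 : ℝ≥0∞) ^ (-(k : ℤ)) = (2⁻¹ : ℝ≥0∞) ^ k := by
    intro k
    rw [ENNReal.zpow_neg, zpow_natCast, ← ENNReal.inv_pow]
  rw [tsum_congr h, ENNReal.tsum_geometric, ENNReal.one_sub_inv_two]
  simp

private lemma S_ne_top : ∑' m : ℤ, (2 : ℝ≥0∞) ^ (-|m|) ≠ ⊤ := by
  rw [tsum_of_nat_of_neg_add_one ENNReal.summable ENNReal.summable]
  refine ENNReal.add_ne_top.2 ⟨?_, ?_⟩
  · have h : ∀ k : ℕ, (2 : ℝ≥0∞) ^ (-|(k : ℤ)|) = (2 : ℝ≥0∞) ^ (-(k : ℤ)) := by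
      intro k; rw [abs_of_nonneg (Int.natCast_nonneg k)]
    rw [tsum_congr h]; exact geo_ne_top
  · have h : ∀ k : ℕ, (2 : ℝ≥0∞) ^ (-|(-((k : ℤ) + 1))|) ≤ (2 : ℝ≥0∞) ^ (-(k : ℤ)) := by
      intro k
      rw [abs_neg, abs_of_nonneg (by omega : (0:ℤ) ≤ (k : ℤ) + 1)]
      exact ENNReal.zpow_le_of_le one_le_two (by omega)
    exact ne_top_of_le_ne_top geo_ne_top (ENNReal.tsum_le_tsum h)

private lemma S_shift (j : ℤ) :
    ∑' n : ℤ, (2 : ℝ≥0∞) ^ (-|j + n|) = ∑' m : ℤ, (2 : ℝ≥0∞) ^ (-|m|) :=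
  (Equiv.addLeft j).tsum_eq fun m => (2 : ℝ≥0∞) ^ (-|m|)

end Aux

/-- On `X = ℤ × ℤ` with `f(i,j) = (i, j+1)` and `μ({(i,j)}) = 2^{−|j|}`
(so `μ B = ∑_{p ∈ B} 2^{−|p₂|}`): `μ(X) = ∞`, `f` is dissipative with generating
wandering set `ℤ × {0}`, and `f` satisfies Condition (SC). -/
theorem stmt_11 (μ : Measure (ℤ × ℤ))
    (hμ : ∀ B : Set (ℤ × ℤ), μ B = ∑' p : B, (2 : ℝ≥0∞) ^ (-|(p : ℤ × ℤ).2|)) :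
    μ Set.univ = ⊤ ∧
    Wandering (fun p : ℤ × ℤ => (p.1, p.2 + 1)) (Set.univ ×ˢ {0}) ∧
    GeneratedBy (fun p : ℤ × ℤ => (p.1, p.2 + 1)) (Set.univ ×ˢ {0}) ∧
    SCcond μ (fun p : ℤ × ℤ => (p.1, p.2 + 1)) := by
  have hmeas : ∀ s : Set (ℤ × ℤ), MeasurableSet s := fun s => s.to_countable.measurableSet
  refine ⟨?_, ?_, ?_, ?_⟩
  · -- μ univ = ⊤
    have h1 : μ (Set.univ ×ˢ {0} : Set (ℤ × ℤ)) = ⊤ := by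
      rw [hμ]
      have hc : ∀ p : ↥(Set.univ ×ˢ {0} : Set (ℤ × ℤ)),
          (2 : ℝ≥0∞) ^ (-|(p : ℤ × ℤ).2|) = 1 := by
        rintro ⟨⟨i, j⟩, hp⟩
        simp only [Set.mem_prod, Set.mem_univ, Set.mem_singleton_iff, true_and] at hp
        simp [hp]
      rw [tsum_congr hc]
      haveI : Infinite ↥(Set.univ ×ˢ {0} : Set (ℤ × ℤ)) :=
        Set.infinite_coe_iff.mpr <|
          Set.infinite_of_injective_forall_mem (f := fun i : ℤ => ((i, 0) : ℤ × ℤ))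
            (fun a b hab => by simpa [Prod.ext_iff] using hab)
            (fun a => by simp)
      exact ENNReal.tsum_const_eq_top_of_ne_zero one_ne_zero
    exact top_le_iff.1 (h1 ▸ measure_mono (Set.subset_univ _))
  · -- Wandering
    intro m n hmn
    simp only [zimg_W]
    rw [Set.disjoint_left]
    rintro p h1 h2
    exact hmn (h1.symm.trans h2)
  · -- GeneratedBy
    ext p
    simp only [Set.mem_iUnion, zimg_W, Set.mem_setOf_eq, Set.mem_univ, iff_true]
    exact ⟨p.2, rfl⟩
  · -- SCcond
    intro ε hε B _ hBfin
    set D : ℕ → Set (ℤ × ℤ) :=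
      fun N => B \ Set.Icc (-(N : ℤ), -(N : ℤ)) ((N : ℤ), (N : ℤ)) with hD
    have hanti : Antitone D := by
      intro a b hab
      apply Set.diff_subset_diff_right
      apply Set.Icc_subset_Icc <;> rw [Prod.le_def] <;>
        constructor <;> simp <;> omega
    have hiInter : (⋂ N, D N) = ∅ := by
      ext p
      simp only [Set.mem_iInter, Set.mem_empty_iff_false, iff_false, not_forall]
      refine ⟨p.1.natAbs + p.2.natAbs, ?_⟩
      intro hmem
      apply hmem.2
      rw [Set.mem_Icc]
      constructor <;> rw [Prod.le_def] <;> constructor <;> simp only [Prod.fst, Prod.snd] <;> omega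
    have hto : Tendsto (μ ∘ D) atTop (nhds 0) := by
      have h := MeasureTheory.tendsto_measure_iInter_atTop (μ := μ)
        (fun N => (hmeas _).nullMeasurableSet) hanti
        ⟨0, (lt_of_le_of_lt (measure_mono Set.diff_subset) hBfin).ne⟩
      rwa [hiInter, measure_empty] at h
    have hev : ∀ᶠ N in atTop, (μ ∘ D) N < ε := hto.eventually_lt_const hε
    obtain ⟨N, hN⟩ := hev.exists
    set C : Set (ℤ × ℤ) := Set.Icc (-(N : ℤ), -(N : ℤ)) ((N : ℤ), (N : ℤ)) with hC
    refine ⟨B ∩ C, Set.inter_subset_left, hmeas _, ?_, ?_⟩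
    · rw [Set.diff_self_inter]
      exact hN
    · -- summability
      have hfin : (B ∩ C).Finite := (Set.finite_Icc _ _).subset Set.inter_subset_right
      have hinj : ∀ n : ℤ, Function.Injective (fun p : ℤ × ℤ => (p.1, p.2 + n)) := by
        intro n a b hab
        simp only [Prod.mk.injEq] at hab
        exact Prod.ext hab.1 (by omega)
      have hμz : ∀ n : ℤ, μ (zimg (fun p : ℤ × ℤ => (p.1, p.2 + 1)) n (B ∩ C))
          = ∑' p : ↥(B ∩ C), (2 : ℝ≥0∞) ^ (-|(p : ℤ × ℤ).2 + n|) := by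
        intro n
        rw [zimg_eq_s11, hμ, tsum_image (fun q : ℤ × ℤ => (2 : ℝ≥0∞) ^ (-|q.2|)) ((hinj n).injOn)]
      haveI := hfin.fintype
      calc ∑' n : ℤ, μ (zimg (fun p : ℤ × ℤ => (p.1, p.2 + 1)) n (B ∩ C))
          = ∑' n : ℤ, ∑ p : ↥(B ∩ C), (2 : ℝ≥0∞) ^ (-|(p : ℤ × ℤ).2 + n|) := by
            refine tsum_congr fun n => ?_
            rw [hμz n, tsum_fintype]
        _ = ∑ p : ↥(B ∩ C), ∑' n : ℤ, (2 : ℝ≥0∞) ^ (-|(p : ℤ × ℤ).2 + n|) :=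
            Summable.tsum_finsetSum fun _ _ => ENNReal.summable
        _ ≠ ⊤ := by
            refine (ENNReal.sum_lt_top.2 fun p _ => ?_).ne
            rw [S_shift]
            exact S_ne_top.lt_top
end
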